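/- arXiv:1803.05775 — 2 statements merged into one kernel-verified Lean document; each statement's English description precedes it below -/
import Mathlib

section
/- Let b be a word over {1,…,n} with leftmost letter 1 at position k and no letter 2 among b₁,…,b_{k−1}. Suppose among b_{k+1},…,bₘ there are exactly i−1 letters equal to 1. If i = 1, then the first row of the mixed insertion tableau of b begins with the entry 1 followed by an entry ≥ 2 that is not 2′; if i ≥ 2, then the first row contains exactly i unprimed 1's in positions (1,1),…,(1,i) and the entry at (1,i+1), if present, is not 2′. -/
/-- Update a tableau (a function with `0` denoting an empty cell; the letter
`k′` is encoded as `2k − 1` and `k` as `2k`) at a single cell. -/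
def upd2 (T : ℕ → ℕ → ℕ) (i j v : ℕ) : ℕ → ℕ → ℕ :=
  fun a b => if a = i ∧ b = j then v else T a b

/-- One bumping phase of Serrano's semistandard shifted mixed insertion, with
fuel.  `mixStep fuel N T true r v` inserts the value `v` into row `r` of `T`
(bumping the leftmost entry strictly greater than `v`); `mixStep fuel N T
false c v` inserts `v` into column `c` (bumping the topmost entry strictly
greater than `v`).  Unprimed bumped entries are inserted into the next row,
primed bumped entries into the next column, and an entry bumped from the main
diagonal is primed and inserted into the next column.  `N` bounds the search
range. -/
def mixStep : ℕ → ℕ → (ℕ → ℕ → ℕ) → Bool → ℕ → ℕ → (ℕ → ℕ → ℕ)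
  | 0, _, T, _, _, _ => T
  | fuel + 1, N, T, true, r, v =>
    match (List.range N).find? (fun j => decide (r ≤ j ∧ T r j ≠ 0 ∧ v < T r j)) with
    | none =>
      match (List.range N).find? (fun j => decide (r ≤ j ∧ T r j = 0)) with
      | none => T
      | some j => upd2 T r j v
    | some j =>
      if j = r then mixStep fuel N (upd2 T r j v) false (j + 1) (T r j - 1)
      else if T r j % 2 = 0 then mixStep fuel N (upd2 T r j v) true (r + 1) (T r j)
      else mixStep fuel N (upd2 T r j v) false (j + 1) (T r j)
  | fuel + 1, N, T, false, c, v =>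
    match (List.range N).find? (fun i => decide (T i c ≠ 0 ∧ v < T i c)) with
    | none =>
      match (List.range N).find? (fun i => decide (T i c = 0)) with
      | none => T
      | some i => upd2 T i c v
    | some i =>
      if T i c % 2 = 0 then mixStep fuel N (upd2 T i c v) true (i + 1) (T i c)
      else mixStep fuel N (upd2 T i c v) false (c + 1) (T i c)

/-- The mixed insertion tableau `P_HM(b)` of a word `b` over `{1,…,n}`:
insert the (unprimed) letters of `b` one by one. -/
def PHM (b : List ℕ) : ℕ → ℕ → ℕ :=
  b.foldl (fun T v => mixStep (b.length + 2) (b.length + 2) T true 0 (2 * v))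
    fun _ _ => 0

namespace S10


/-- characterization of find? on a range -/
lemma find?_range_none {p : ℕ → Bool} {N : ℕ}
    (h : (List.range N).find? p = none) : ∀ m, m < N → ¬ p m = true := by
  intro m hm
  exact List.find?_eq_none.mp h m (List.mem_range.mpr hm)

lemma find?_range_some {p : ℕ → Bool} {N j : ℕ}
    (h : (List.range N).find? p = some j) :
    j < N ∧ p j = true ∧ ∀ m, m < j → ¬ p m = true := by
  induction N with
  | zero => simp at h
  | succ n ih =>
    rw [List.range_succ, List.find?_append] at h
    cases hfind : (List.range n).find? p with
    | none =>
      rw [hfind] at h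
      simp only [Option.none_or] at h
      have : p n = true ∧ j = n := by
        by_cases hp : p n
        · simp [List.find?, hp] at h; exact ⟨hp, h.symm⟩
        · simp [List.find?, hp] at h
      obtain ⟨hp, rfl⟩ := this
      exact ⟨Nat.lt_succ_self _, hp, fun m hm => find?_range_none hfind m hm⟩
    | some j' =>
      rw [hfind] at h
      have h : j' = j := by simpa using h
      subst h
      obtain ⟨h1, h2, h3⟩ := ih hfind
      exact ⟨Nat.lt_succ_of_lt h1, h2, h3⟩

lemma find?_range_eq_some {p : ℕ → Bool} {N j : ℕ} (hj : j < N) (hp : p j = true)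
    (hmin : ∀ m, m < j → ¬ p m = true) : (List.range N).find? p = some j := by
  cases hfind : (List.range N).find? p with
  | none => exact absurd hp (find?_range_none hfind j hj)
  | some j' =>
    obtain ⟨h1, h2, h3⟩ := find?_range_some hfind
    rcases Nat.lt_trichotomy j j' with h | h | h
    · exact absurd hp (h3 j h)
    · rw [h]
    · exact absurd h2 (hmin j' h)


/-- The master invariant on the (window of the) tableau. -/
structure Inv (N L k : ℕ) (T : ℕ → ℕ → ℕ) : Prop where
  sh : ∀ a b, b < N → T a b ≠ 0 → a ≤ b
  rc : ∀ a b, a ≤ b → b + 1 < N → T a (b+1) ≠ 0 → T a b ≠ 0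
  cc : ∀ a b, b < N → T (a+1) b ≠ 0 → T a b ≠ 0
  ri : ∀ a b, b + 1 < N → T a b ≠ 0 → T a (b+1) ≠ 0 →
        T a b ≤ T a (b+1) ∧ (T a b % 2 = 1 → T a b ≠ T a (b+1))
  ci : ∀ a b, b < N → T a b ≠ 0 → T (a+1) b ≠ 0 →
        T a b ≤ T (a+1) b ∧ (T a b % 2 = 0 → T a b ≠ T (a+1) b)
  dg : ∀ a, a < N → T a a % 2 = 0
  jo : ∀ a b, N ≤ b → T a b = 0 ∨ T a b % 2 = 1
  hv : ∀ a b, T a b = 0 ∨ T a b = 2 ∨ L ≤ T a b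
  e2 : ∀ m, m < k → m < N → T 0 m = 2
  e4 : ∀ a b, T a b = 2 → a = 0 ∧ b < k ∧ b < N

lemma upd2_same (T : ℕ → ℕ → ℕ) (i j v : ℕ) : upd2 T i j v i j = v := by simp [upd2]

lemma upd2_ne (T : ℕ → ℕ → ℕ) (i j v a b : ℕ) (h : ¬(a = i ∧ b = j)) :
    upd2 T i j v a b = T a b := by simp [upd2, h]

section chains
variable {N L k : ℕ} {T : ℕ → ℕ → ℕ}

lemma row_nz (h : Inv N L k T) {a b1 : ℕ} :
    ∀ b2, a ≤ b1 → b1 ≤ b2 → b2 < N → T a b2 ≠ 0 → T a b1 ≠ 0 := by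
  intro b2
  induction b2 with
  | zero => intro _ h12 _ hz; rw [Nat.le_zero.mp h12]; exact hz
  | succ m ih =>
    intro hab h12 hN hz
    rcases Nat.eq_or_lt_of_le h12 with he | hlt
    · subst he; exact hz
    · exact ih hab (by omega) (by omega) (h.rc a m (by omega) hN hz)

lemma row_mono (h : Inv N L k T) {a b1 : ℕ} :
    ∀ b2, a ≤ b1 → b1 ≤ b2 → b2 < N → T a b2 ≠ 0 → T a b1 ≤ T a b2 := by
  intro b2
  induction b2 with
  | zero => intro _ h12 _ _; rw [Nat.le_zero.mp h12]
  | succ m ih =>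
    intro hab h12 hN hz
    rcases Nat.eq_or_lt_of_le h12 with he | hlt
    · subst he; exact le_rfl
    · have hm : T a m ≠ 0 := h.rc a m (by omega) hN hz
      calc T a b1 ≤ T a m := ih hab (by omega) (by omega) hm
        _ ≤ T a (m+1) := (h.ri a m hN hm hz).1

lemma col_nz (h : Inv N L k T) {a1 b : ℕ} :
    ∀ a2, a1 ≤ a2 → b < N → T a2 b ≠ 0 → T a1 b ≠ 0 := by
  intro a2
  induction a2 with
  | zero => intro h12 _ hz; rw [Nat.le_zero.mp h12]; exact hz
  | succ m ih =>
    intro h12 hN hz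
    rcases Nat.eq_or_lt_of_le h12 with he | hlt
    · subst he; exact hz
    · exact ih (by omega) hN (h.cc m b hN hz)

lemma col_mono (h : Inv N L k T) {a1 b : ℕ} :
    ∀ a2, a1 ≤ a2 → b < N → T a2 b ≠ 0 → T a1 b ≤ T a2 b := by
  intro a2
  induction a2 with
  | zero => intro h12 _ _; rw [Nat.le_zero.mp h12]
  | succ m ih =>
    intro h12 hN hz
    rcases Nat.eq_or_lt_of_le h12 with he | hlt
    · subst he; exact le_rfl
    · have hm : T m b ≠ 0 := h.cc m b hN hz
      calc T a1 b ≤ T m b := ih (by omega) hN hm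
        _ ≤ T (m+1) b := (h.ci m b hN hm hz).1

end chains

section updlemmas
variable {N L k k' : ℕ} {T : ℕ → ℕ → ℕ}

/-- A row-mode write at `(r, j)` preserves the invariant. -/
lemma inv_upd_row {r j v : ℕ} (h : Inv N L k T) (hL4 : 4 ≤ L)
    (hjN : j < N) (hrj : r ≤ j) (hve : v % 2 = 0)
    (hk : (L ≤ v ∧ 4 ≤ v ∧ k' = k) ∨ (v = 2 ∧ r = 0 ∧ j = k ∧ k' = k + 1))
    (hminz : ∀ m, r ≤ m → m < j → T r m ≠ 0 ∧ T r m ≤ v)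
    (hcur : T r j = 0 ∨ v < T r j)
    (hup : 1 ≤ r → T (r-1) j ≠ 0 ∧
      ∀ m, m ≤ j → T (r-1) m ≤ v ∧ (T (r-1) m % 2 = 0 → T (r-1) m ≠ v)) :
    Inv N L k' (upd2 T r j v) := by
  have hv2 : 2 ≤ v := by rcases hk with ⟨_, h4, _⟩ | ⟨he, _⟩ <;> omega
  have hv0 : v ≠ 0 := by omega
  have hkk' : k ≤ k' := by rcases hk with ⟨_, _, he⟩ | ⟨_, _, _, he⟩ <;> omega
  constructor
  · -- sh
    intro a b hbN hz
    by_cases hc : a = r ∧ b = j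
    · omega
    · rw [upd2_ne T r j v a b hc] at hz; exact h.sh a b hbN hz
  · -- rc
    intro a b hab hbN h1
    by_cases hc1 : a = r ∧ b + 1 = j
    · obtain ⟨rfl, hbj⟩ := hc1
      rw [upd2_ne T a j v a b (by omega)]
      exact (hminz b hab (by omega)).1
    · by_cases hc2 : a = r ∧ b = j
      · obtain ⟨rfl, rfl⟩ := hc2; rw [upd2_same]; exact hv0
      · rw [upd2_ne T r j v a (b+1) hc1] at h1
        rw [upd2_ne T r j v a b hc2]
        exact h.rc a b hab hbN h1
  · -- cc
    intro a b hbN h1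
    by_cases hc1 : a + 1 = r ∧ b = j
    · obtain ⟨har, rfl⟩ := hc1
      rw [upd2_ne T r b v a b (by omega)]
      have := (hup (by omega)).1
      have hr1 : r - 1 = a := by omega
      rwa [hr1] at this
    · by_cases hc2 : a = r ∧ b = j
      · obtain ⟨rfl, rfl⟩ := hc2; rw [upd2_same]; exact hv0
      · rw [upd2_ne T r j v (a+1) b hc1] at h1
        rw [upd2_ne T r j v a b hc2]
        exact h.cc a b hbN h1
  · -- ri
    intro a b hbN h1 h2
    by_cases hc1 : a = r ∧ b = j
    · obtain ⟨rfl, rfl⟩ := hc1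
      rw [upd2_same]
      rw [upd2_ne T a b v a (b+1) (by omega)] at h2 ⊢
      rcases hcur with hz | hlt
      · exact absurd (h.rc a b hrj hbN h2) (by simp [hz])
      · have hnz : T a b ≠ 0 := by omega
        have := (h.ri a b hbN hnz h2).1
        exact ⟨by omega, fun _ => by omega⟩
    · by_cases hc2 : a = r ∧ b + 1 = j
      · obtain ⟨rfl, hbj⟩ := hc2
        rw [upd2_ne T a j v a b (by omega)] at h1 ⊢
        rw [hbj] at h2 ⊢
        rw [upd2_same] at h2 ⊢
        have hrb : a ≤ b := by
          have := h.sh a b (by omega) h1; omega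
        have := (hminz b hrb (by omega)).2
        exact ⟨this, fun ho => by omega⟩
      · rw [upd2_ne T r j v a b hc1] at h1 ⊢
        rw [upd2_ne T r j v a (b+1) hc2] at h2 ⊢
        exact h.ri a b hbN h1 h2
  · -- ci
    intro a b hbN h1 h2
    by_cases hc1 : a = r ∧ b = j
    · obtain ⟨rfl, rfl⟩ := hc1
      rw [upd2_same]
      rw [upd2_ne T a b v (a+1) b (by omega)] at h2 ⊢
      rcases hcur with hz | hlt
      · exact absurd (h.cc a b hbN h2) (by simp [hz])
      · have hnz : T a b ≠ 0 := by omega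
        have := (h.ci a b hbN hnz h2).1
        exact ⟨by omega, fun _ => by omega⟩
    · by_cases hc2 : a + 1 = r ∧ b = j
      · obtain ⟨har, rfl⟩ := hc2
        rw [upd2_ne T r b v a b (by omega)]
        rw [← har]
        rw [upd2_same]
        have := (hup (by omega)).2 b le_rfl
        have hr1 : a + 1 - 1 = a := by omega
        rw [← har, hr1] at this
        exact ⟨this.1, this.2⟩
      · rw [upd2_ne T r j v a b hc1] at h1 ⊢
        rw [upd2_ne T r j v (a+1) b hc2] at h2 ⊢
        exact h.ci a b hbN h1 h2
  · -- dg
    intro a haN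
    by_cases hc : a = r ∧ a = j
    · obtain ⟨rfl, haj⟩ := hc
      subst haj
      rw [upd2_same]; exact hve
    · rw [upd2_ne T r j v a a hc]; exact h.dg a haN
  · -- jo
    intro a b hNb
    rw [upd2_ne T r j v a b (by omega)]
    exact h.jo a b hNb
  · -- hv
    intro a b
    by_cases hc : a = r ∧ b = j
    · obtain ⟨rfl, rfl⟩ := hc
      rw [upd2_same]
      rcases hk with ⟨hLv, _, _⟩ | ⟨he, _⟩
      · right; right; exact hLv
      · right; left; exact he
    · rw [upd2_ne T r j v a b hc]; exact h.hv a b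
  · -- e2
    intro m hmk hmN
    rcases hk with ⟨hLv, h4v, hke⟩ | ⟨he, hr0, hjk, hke⟩
    · subst hke
      by_cases hc : (0 : ℕ) = r ∧ m = j
      · exfalso
        obtain ⟨hr0, rfl⟩ := hc
        have h2 : T 0 m = 2 := h.e2 m hmk hmN
        rw [← hr0] at hcur
        rcases hcur with hz | hlt <;> omega
      · rw [upd2_ne T r j v 0 m hc]; exact h.e2 m hmk hmN
    · by_cases hc : m = j
      · have : upd2 T r j v 0 m = v := by simp [upd2, hr0, hc]
        rw [this, he]
      · rw [upd2_ne T r j v 0 m (by omega)]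
        exact h.e2 m (by omega) hmN
  · -- e4
    intro a b hab
    by_cases hc : a = r ∧ b = j
    · obtain ⟨rfl, rfl⟩ := hc
      rw [upd2_same] at hab
      rcases hk with ⟨_, h4v, _⟩ | ⟨he, hr0, hjk, hke⟩
      · omega
      · exact ⟨hr0, by omega, hjN⟩
    · rw [upd2_ne T r j v a b hc] at hab
      obtain ⟨h1, h2, h3⟩ := h.e4 a b hab
      exact ⟨h1, by omega, h3⟩

/-- A column-mode write at `(i, c)` (inside the window) preserves the invariant. -/
lemma inv_upd_col {i c v : ℕ} (h : Inv N L k T) (hL4 : 4 ≤ L)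
    (hcN : c < N) (hic : i < c) (hvo : v % 2 = 1) (hvL : L ≤ v)
    (hminz : ∀ y, y < i → T y c ≠ 0 ∧ T y c ≤ v)
    (hcur : T i c = 0 ∨ v < T i c)
    (hleftnz : T i (c-1) ≠ 0)
    (hleft : ∀ y, y ≤ i → T y (c-1) ≤ v ∧ (T y (c-1) % 2 = 1 → T y (c-1) ≠ v)) :
    Inv N L k (upd2 T i c v) := by
  have hv4 : 4 ≤ v := hL4.trans hvL
  have hv0 : v ≠ 0 := by omega
  constructor
  · -- sh
    intro a b hbN hz
    by_cases hc : a = i ∧ b = c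
    · omega
    · rw [upd2_ne T i c v a b hc] at hz; exact h.sh a b hbN hz
  · -- rc
    intro a b hab hbN h1
    by_cases hc1 : a = i ∧ b + 1 = c
    · obtain ⟨rfl, hbc⟩ := hc1
      rw [upd2_ne T a c v a b (by omega)]
      have : c - 1 = b := by omega
      rwa [this] at hleftnz
    · by_cases hc2 : a = i ∧ b = c
      · obtain ⟨rfl, rfl⟩ := hc2; rw [upd2_same]; exact hv0
      · rw [upd2_ne T i c v a (b+1) hc1] at h1
        rw [upd2_ne T i c v a b hc2]
        exact h.rc a b hab hbN h1
  · -- cc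
    intro a b hbN h1
    by_cases hc1 : a + 1 = i ∧ b = c
    · obtain ⟨hai, rfl⟩ := hc1
      rw [upd2_ne T i b v a b (by omega)]
      exact (hminz a (by omega)).1
    · by_cases hc2 : a = i ∧ b = c
      · obtain ⟨rfl, rfl⟩ := hc2; rw [upd2_same]; exact hv0
      · rw [upd2_ne T i c v (a+1) b hc1] at h1
        rw [upd2_ne T i c v a b hc2]
        exact h.cc a b hbN h1
  · -- ri
    intro a b hbN h1 h2
    by_cases hc1 : a = i ∧ b = c
    · obtain ⟨rfl, rfl⟩ := hc1
      rw [upd2_same]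
      rw [upd2_ne T a b v a (b+1) (by omega)] at h2 ⊢
      rcases hcur with hz | hlt
      · exact absurd (h.rc a b (by omega) hbN h2) (by simp [hz])
      · have hnz : T a b ≠ 0 := by omega
        have := (h.ri a b hbN hnz h2).1
        exact ⟨by omega, fun _ => by omega⟩
    · by_cases hc2 : a = i ∧ b + 1 = c
      · obtain ⟨rfl, hbc⟩ := hc2
        rw [upd2_ne T a c v a b (by omega)] at h1 ⊢
        rw [hbc] at h2 ⊢
        rw [upd2_same] at h2 ⊢
        have := hleft a le_rfl
        have hcb : c - 1 = b := by omega
        rw [hcb] at this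
        exact ⟨this.1, this.2⟩
      · rw [upd2_ne T i c v a b hc1] at h1 ⊢
        rw [upd2_ne T i c v a (b+1) hc2] at h2 ⊢
        exact h.ri a b hbN h1 h2
  · -- ci
    intro a b hbN h1 h2
    by_cases hc1 : a = i ∧ b = c
    · obtain ⟨rfl, rfl⟩ := hc1
      rw [upd2_same]
      rw [upd2_ne T a b v (a+1) b (by omega)] at h2 ⊢
      rcases hcur with hz | hlt
      · exact absurd (h.cc a b hbN h2) (by simp [hz])
      · have hnz : T a b ≠ 0 := by omega
        have := (h.ci a b hbN hnz h2).1
        exact ⟨by omega, fun _ => by omega⟩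
    · by_cases hc2 : a + 1 = i ∧ b = c
      · obtain ⟨hai, rfl⟩ := hc2
        rw [upd2_ne T i b v a b (by omega)]
        rw [← hai]
        rw [upd2_same]
        have := (hminz a (by omega)).2
        exact ⟨this, fun hev => by omega⟩
      · rw [upd2_ne T i c v a b hc1] at h1 ⊢
        rw [upd2_ne T i c v (a+1) b hc2] at h2 ⊢
        exact h.ci a b hbN h1 h2
  · -- dg
    intro a haN
    by_cases hc : a = i ∧ a = c
    · omega
    · rw [upd2_ne T i c v a a hc]; exact h.dg a haN
  · -- jo
    intro a b hNb
    rw [upd2_ne T i c v a b (by omega)]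
    exact h.jo a b hNb
  · -- hv
    intro a b
    by_cases hc : a = i ∧ b = c
    · obtain ⟨rfl, rfl⟩ := hc; rw [upd2_same]; right; right; exact hvL
    · rw [upd2_ne T i c v a b hc]; exact h.hv a b
  · -- e2
    intro m hmk hmN
    by_cases hc : (0 : ℕ) = i ∧ m = c
    · exfalso
      obtain ⟨hi0, rfl⟩ := hc
      have h2 : T 0 m = 2 := h.e2 m hmk hmN
      rw [← hi0] at hcur
      rcases hcur with hz | hlt <;> omega
    · rw [upd2_ne T i c v 0 m hc]; exact h.e2 m hmk hmN
  · -- e4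
    intro a b hab
    by_cases hc : a = i ∧ b = c
    · obtain ⟨rfl, rfl⟩ := hc
      rw [upd2_same] at hab; omega
    · rw [upd2_ne T i c v a b hc] at hab
      exact h.e4 a b hab

/-- A column-mode write outside the window (junk column) preserves the invariant. -/
lemma inv_upd_junk {i c v : ℕ} (h : Inv N L k T)
    (hcN : N ≤ c) (hvo : v % 2 = 1) (hvL : L ≤ v) :
    Inv N L k (upd2 T i c v) := by
  constructor
  · intro a b hbN hz
    rw [upd2_ne T i c v a b (by omega)] at hz; exact h.sh a b hbN hz
  · intro a b hab hbN h1
    rw [upd2_ne T i c v a (b+1) (by omega)] at h1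
    rw [upd2_ne T i c v a b (by omega)]
    exact h.rc a b hab hbN h1
  · intro a b hbN h1
    rw [upd2_ne T i c v (a+1) b (by omega)] at h1
    rw [upd2_ne T i c v a b (by omega)]
    exact h.cc a b hbN h1
  · intro a b hbN h1 h2
    rw [upd2_ne T i c v a b (by omega)] at h1 ⊢
    rw [upd2_ne T i c v a (b+1) (by omega)] at h2 ⊢
    exact h.ri a b hbN h1 h2
  · intro a b hbN h1 h2
    rw [upd2_ne T i c v a b (by omega)] at h1 ⊢
    rw [upd2_ne T i c v (a+1) b (by omega)] at h2 ⊢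
    exact h.ci a b hbN h1 h2
  · intro a haN
    rw [upd2_ne T i c v a a (by omega)]
    exact h.dg a haN
  · intro a b hNb
    by_cases hc : a = i ∧ b = c
    · obtain ⟨rfl, rfl⟩ := hc; rw [upd2_same]; right; exact hvo
    · rw [upd2_ne T i c v a b hc]; exact h.jo a b hNb
  · intro a b
    by_cases hc : a = i ∧ b = c
    · obtain ⟨rfl, rfl⟩ := hc; rw [upd2_same]; right; right; exact hvL
    · rw [upd2_ne T i c v a b hc]; exact h.hv a b
  · intro m hmk hmN
    rw [upd2_ne T i c v 0 m (by omega)]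
    exact h.e2 m hmk hmN
  · intro a b hab
    by_cases hc : a = i ∧ b = c
    · obtain ⟨rfl, rfl⟩ := hc; rw [upd2_same] at hab; omega
    · rw [upd2_ne T i c v a b hc] at hab; exact h.e4 a b hab

end updlemmas
section findP
variable {P : ℕ → Prop} [DecidablePred P] {N j : ℕ}

lemma find?_range_noneP (h : (List.range N).find? (fun m => decide (P m)) = none) :
    ∀ m, m < N → ¬ P m := by
  intro m hm
  have := find?_range_none h m hm
  simpa using this

lemma find?_range_someP (h : (List.range N).find? (fun m => decide (P m)) = some j) :
    j < N ∧ P j ∧ ∀ m, m < j → ¬ P m := by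
  obtain ⟨h1, h2, h3⟩ := find?_range_some h
  exact ⟨h1, by simpa using h2, fun m hm => by simpa using h3 m hm⟩

end findP

/-- Precondition for a row-mode insertion. -/
def PreRow (N L : ℕ) (T : ℕ → ℕ → ℕ) (r v : ℕ) : Prop :=
  v % 2 = 0 ∧ L ≤ v ∧ 4 ≤ v ∧
  (r = 0 ∨ ∃ j0, r ≤ j0 ∧ j0 < N ∧ T (r-1) j0 ≠ 0 ∧ (T r j0 = 0 ∨ v < T r j0) ∧
      ∀ m, m ≤ j0 → T (r-1) m ≤ v ∧ (T (r-1) m % 2 = 0 → T (r-1) m ≠ v))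

/-- Precondition for a column-mode insertion. -/
def PreCol (N L : ℕ) (T : ℕ → ℕ → ℕ) (c v : ℕ) : Prop :=
  v % 2 = 1 ∧ L ≤ v ∧ 5 ≤ v ∧ 1 ≤ c ∧
  (c < N → ∃ x0, x0 < c ∧ T x0 (c-1) ≠ 0 ∧ (T x0 c = 0 ∨ v < T x0 c) ∧
      ∀ y, y ≤ x0 → T y (c-1) ≤ v ∧ (T y (c-1) % 2 = 1 → T y (c-1) ≠ v))

theorem core (fuel : ℕ) : ∀ {N L k : ℕ} (T : ℕ → ℕ → ℕ) (mode : Bool) (x v : ℕ),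
    4 ≤ L → Inv N L k T →
    (mode = true → PreRow N L T x v) → (mode = false → PreCol N L T x v) →
    Inv N L k (mixStep fuel N T mode x v) := by
  induction fuel with
  | zero =>
    intro N L k T mode x v _ hI _ _
    cases mode <;> simpa [mixStep] using hI
  | succ f ih =>
    intro N L k T mode x v hL4 hI hpT hpF
    cases mode
    case false =>
      -- column mode, inserting v into column x
      obtain ⟨hvo, hvL, hv5, hx1, hwit⟩ := hpF rfl
      rw [mixStep]
      split
      case _ hfind =>
        split
        case _ hfind2 => exact hI
        case _ i hfind2 =>
          -- placement at (i, x)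
          obtain ⟨hiN, hiz, himin⟩ := find?_range_someP hfind2
          have hnone := find?_range_noneP hfind
          by_cases hcN : x < N
          · obtain ⟨x0, hx0c, hx0l, hx0cur, hx0all⟩ := hwit hcN
            have hx0z : T x0 x = 0 := by
              rcases hx0cur with hz | hlt
              · exact hz
              · exfalso
                have hnz : T x0 x ≠ 0 := by omega
                exact hnone x0 (by omega) ⟨hnz, hlt⟩
            have hix0 : i ≤ x0 := by
              by_contra hcon
              exact himin x0 (by omega) hx0z
            refine inv_upd_col hI hL4 hcN (by omega) hvo hvL ?_ (Or.inl hiz) ?_ ?_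
            · intro y hyi
              constructor
              · exact fun h0 => himin y hyi h0
              · by_contra hcon
                exact hnone y (by omega) ⟨fun h0 => himin y hyi h0, by omega⟩
            · exact col_nz hI x0 hix0 (by omega) hx0l
            · intro y hy; exact hx0all y (by omega)
          · exact inv_upd_junk hI (by omega) hvo hvL
      case _ i hfind =>
        -- bump at (i, x), carried value w = T i x
        obtain ⟨hiN, hprop, hmin⟩ := find?_range_someP hfind
        obtain ⟨hinz, hvlt⟩ := hprop
        have hw2 : T i x ≠ 2 := by omega
        by_cases hcN : x < N
        · obtain ⟨x0, hx0c, hx0l, hx0cur, hx0all⟩ := hwit hcN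
          have hwL : L ≤ T i x := by
            rcases hI.hv i x with h0 | h2 | hL <;> first | omega | exact hL
          have hix0 : i ≤ x0 := by
            rcases hx0cur with hz | hlt
            · by_contra hcon
              exact (col_nz hI i (by omega) hcN hinz) hz
            · by_contra hcon
              have hx0nz : T x0 x ≠ 0 := by omega
              exact hmin x0 (by omega) ⟨hx0nz, hlt⟩
          have hic : i < x := by omega
          have hminz : ∀ y, y < i → T y x ≠ 0 ∧ T y x ≤ v := by
            intro y hy
            have hynz : T y x ≠ 0 := col_nz hI i (by omega) hcN hinz
            refine ⟨hynz, ?_⟩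
            by_contra hcon
            exact hmin y hy ⟨hynz, by omega⟩
          have hI' := inv_upd_col hI hL4 hcN hic hvo hvL hminz (Or.inr hvlt)
            (col_nz hI x0 hix0 (by omega) hx0l)
            (fun y hy => hx0all y (by omega))
          have hTix : T i (x-1) ≤ v := (hx0all i hix0).1
          by_cases hpar : T i x % 2 = 0
          · rw [if_pos hpar]
            refine ih _ true _ _ hL4 hI' ?_ (by simp)
            intro _
            refine ⟨hpar, hwL, by omega, Or.inr ⟨x, by omega, hcN, ?_, ?_, ?_⟩⟩
            · have : i + 1 - 1 = i := by omega
              rw [this, upd2_same]; omega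
            · rw [upd2_ne T i x v (i+1) x (by omega)]
              by_cases hz : T (i+1) x = 0
              · exact Or.inl hz
              · right
                have := hI.ci i x hcN hinz hz
                omega
            · intro m hm
              have hii : i + 1 - 1 = i := by omega
              rw [hii]
              by_cases hmx : m = x
              · subst hmx
                rw [upd2_same]
                constructor
                · omega
                · intro _; omega
              · rw [upd2_ne T i x v i m (by omega)]
                by_cases hz : T i m = 0
                · rw [hz]; exact ⟨by omega, fun _ => by omega⟩
                · have him : i ≤ m := hI.sh i m (by omega) hz
                  have hlnz : T i (x-1) ≠ 0 := col_nz hI x0 hix0 (by omega) hx0l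
                  have hmono : T i m ≤ T i (x-1) :=
                    row_mono hI (x-1) him (by omega) (by omega) hlnz
                  exact ⟨by omega, fun _ => by omega⟩
          · rw [if_neg hpar]
            refine ih _ false _ _ hL4 hI' (by simp) ?_
            intro _
            refine ⟨by omega, hwL, by omega, by omega, ?_⟩
            intro hxN1
            refine ⟨i, by omega, ?_, ?_, ?_⟩
            · have : x + 1 - 1 = x := by omega
              rw [this, upd2_same]; omega
            · rw [upd2_ne T i x v i (x+1) (by omega)]
              by_cases hz : T i (x+1) = 0
              · exact Or.inl hz
              · right
                have := hI.ri i x hxN1 hinz hz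
                omega
            · intro y hy
              have hxx : x + 1 - 1 = x := by omega
              rw [hxx]
              by_cases hyi : y = i
              · subst hyi
                rw [upd2_same]
                exact ⟨by omega, fun _ => by omega⟩
              · rw [upd2_ne T i x v y x (by omega)]
                have := hminz y (by omega)
                exact ⟨by omega, fun _ => by omega⟩
        · -- junk column
          have hwo : T i x % 2 = 1 := by
            rcases hI.jo i x (by omega) with h0 | h1
            · exact absurd h0 hinz
            · exact h1
          have hwL : L ≤ T i x := by
            have hne2 : T i x ≠ 2 := by
              intro h2
              obtain ⟨_, _, hbN⟩ := hI.e4 i x h2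
              omega
            rcases hI.hv i x with h0 | h2 | hL <;> first | omega | exact hL
          rw [if_neg (by omega : ¬ T i x % 2 = 0)]
          have hI' : Inv N L k (upd2 T i x v) := inv_upd_junk hI (by omega) hvo hvL
          refine ih _ false _ _ hL4 hI' (by simp) ?_
          intro _
          exact ⟨hwo, hwL, by omega, by omega, fun hcon => absurd hcon (by omega)⟩
    case true =>
      -- row mode, inserting v into row x
      obtain ⟨hve, hvL, hv4, hwitR⟩ := hpT rfl
      rw [mixStep]
      split
      case _ hfind =>
        split
        case _ hfind2 => exact hI
        case _ j hfind2 =>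
          -- placement at (x, j)
          obtain ⟨hjN, hjz, hjmin⟩ := find?_range_someP hfind2
          obtain ⟨hrj, hz⟩ := hjz
          have hnone := find?_range_noneP hfind
          refine inv_upd_row hI hL4 hjN hrj hve (Or.inl ⟨hvL, hv4, rfl⟩) ?_ (Or.inl hz) ?_
          · intro m hrm hmj
            have hnz : T x m ≠ 0 := by
              intro h0; exact hjmin m hmj ⟨hrm, h0⟩
            refine ⟨hnz, ?_⟩
            by_contra hcon
            exact hnone m (by omega) ⟨hrm, hnz, by omega⟩
          · intro hr1
            rcases hwitR with hr0 | ⟨j0, hj0r, hj0N, hj0nz, hj0cur, hj0all⟩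
            · omega
            · have hj0z : T x j0 = 0 := by
                rcases hj0cur with h0 | hlt
                · exact h0
                · exfalso
                  exact hnone j0 hj0N ⟨hj0r, by omega, hlt⟩
              have hjj0 : j ≤ j0 := by
                by_contra hcon
                exact hjmin j0 (by omega) ⟨hj0r, hj0z⟩
              constructor
              · exact row_nz hI j0 (by omega) hjj0 hj0N hj0nz
              · intro m hm; exact hj0all m (by omega)
      case _ j hfind =>
        -- bump at (x, j), carried value w = T x j
        obtain ⟨hjN, hprop, hmin⟩ := find?_range_someP hfind
        obtain ⟨hrj, hjnz, hvlt⟩ := hprop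
        have hwL : L ≤ T x j := by
          rcases hI.hv x j with h0 | h2 | hL <;> first | omega | exact hL
        have hminz : ∀ m, x ≤ m → m < j → T x m ≠ 0 ∧ T x m ≤ v := by
          intro m hxm hmj
          have hnz : T x m ≠ 0 := row_nz hI j hxm (by omega) hjN hjnz
          refine ⟨hnz, ?_⟩
          by_contra hcon
          exact hmin m hmj ⟨hxm, hnz, by omega⟩
        have hupfacts : 1 ≤ x → T (x-1) j ≠ 0 ∧
            ∀ m, m ≤ j → T (x-1) m ≤ v ∧ (T (x-1) m % 2 = 0 → T (x-1) m ≠ v) := by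
          intro hx1
          rcases hwitR with hr0 | ⟨j0, hj0r, hj0N, hj0nz, hj0cur, hj0all⟩
          · omega
          · have hjj0 : j ≤ j0 := by
              rcases hj0cur with h0 | hlt
              · by_contra hcon
                exact (row_nz hI j hj0r (by omega) hjN hjnz) h0
              · by_contra hcon
                exact hmin j0 (by omega) ⟨hj0r, by omega, hlt⟩
            exact ⟨row_nz hI j0 (by omega) hjj0 hj0N hj0nz,
              fun m hm => hj0all m (by omega)⟩
        have hI' := inv_upd_row hI hL4 hjN hrj hve (Or.inl ⟨hvL, hv4, rfl⟩) hminz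
          (Or.inr hvlt) hupfacts
        by_cases hjr : j = x
        · rw [if_pos hjr]
          -- diagonal bump: carried T x j - 1 into column j + 1
          have hde : T x x % 2 = 0 := hI.dg x (by omega)
          have hde' : T x j % 2 = 0 := by rw [hjr]; exact hde
          refine ih _ false _ _ hL4 hI' (by simp) ?_
          intro _
          refine ⟨by omega, by omega, by omega, by omega, ?_⟩
          intro hjN1
          refine ⟨x, by omega, ?_, ?_, ?_⟩
          · have hc1 : j + 1 - 1 = j := by omega
            rw [hc1, upd2_same]; omega
          · rw [upd2_ne T x j v x (j+1) (by omega)]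
            by_cases hz : T x (j+1) = 0
            · exact Or.inl hz
            · right
              have := hI.ri x j hjN1 hjnz hz
              omega
          · intro y hy
            have hc1 : j + 1 - 1 = j := by omega
            rw [hc1]
            by_cases hyx : y = x
            · subst hyx
              rw [upd2_same]
              exact ⟨by omega, fun _ => by omega⟩
            · rw [upd2_ne T x j v y j (by omega)]
              have hx1 : 1 ≤ x := by omega
              obtain ⟨hnz1, hall⟩ := hupfacts hx1
              have hmono : T y j ≤ T (x-1) j := col_mono hI (x-1) (by omega) (by omega) hnz1
              have hle : T (x-1) j ≤ v := (hall j le_rfl).1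
              exact ⟨by omega, fun _ => by omega⟩
        · rw [if_neg hjr]
          have hrjlt : x < j := by omega
          by_cases hpar : T x j % 2 = 0
          · rw [if_pos hpar]
            refine ih _ true _ _ hL4 hI' ?_ (by simp)
            intro _
            refine ⟨hpar, hwL, by omega, Or.inr ⟨j, by omega, hjN, ?_, ?_, ?_⟩⟩
            · have hc1 : x + 1 - 1 = x := by omega
              rw [hc1, upd2_same]; omega
            · rw [upd2_ne T x j v (x+1) j (by omega)]
              by_cases hz : T (x+1) j = 0
              · exact Or.inl hz
              · right
                have := hI.ci x j (by omega) (by omega) hz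
                omega
            · intro m hm
              have hc1 : x + 1 - 1 = x := by omega
              rw [hc1]
              by_cases hmj : m = j
              · subst hmj
                rw [upd2_same]
                exact ⟨by omega, fun _ => by omega⟩
              · rw [upd2_ne T x j v x m (by omega)]
                by_cases hxm : x ≤ m
                · have := hminz m hxm (by omega)
                  exact ⟨by omega, fun _ => by omega⟩
                · have hz : T x m = 0 := by
                    by_contra hnz
                    exact hxm (hI.sh x m (by omega) hnz)
                  rw [hz]
                  exact ⟨by omega, fun _ => by omega⟩
          · rw [if_neg hpar]
            refine ih _ false _ _ hL4 hI' (by simp) ?_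
            intro _
            refine ⟨by omega, hwL, by omega, by omega, ?_⟩
            intro hjN1
            refine ⟨x, by omega, ?_, ?_, ?_⟩
            · have hc1 : j + 1 - 1 = j := by omega
              rw [hc1, upd2_same]; omega
            · rw [upd2_ne T x j v x (j+1) (by omega)]
              by_cases hz : T x (j+1) = 0
              · exact Or.inl hz
              · right
                have := hI.ri x j hjN1 (by omega) hz
                omega
            · intro y hy
              have hc1 : j + 1 - 1 = j := by omega
              rw [hc1]
              by_cases hyx : y = x
              · subst hyx
                rw [upd2_same]
                exact ⟨by omega, fun _ => by omega⟩
              · rw [upd2_ne T x j v y j (by omega)]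
                have hx1 : 1 ≤ x := by omega
                obtain ⟨hnz1, hall⟩ := hupfacts hx1
                have hnzx : T (x-1) j ≠ 0 := hnz1
                have hmono : T y j ≤ T (x-1) j := col_mono hI (x-1) (by omega) (by omega) hnzx
                have hle : T (x-1) j ≤ v := (hall j le_rfl).1
                exact ⟨by omega, fun _ => by omega⟩
lemma inv_weaken {N L L' k : ℕ} {T : ℕ → ℕ → ℕ} (h : Inv N L k T) (hLL : L' ≤ L) :
    Inv N L' k T := by
  refine ⟨h.sh, h.rc, h.cc, h.ri, h.ci, h.dg, h.jo, ?_, h.e2, h.e4⟩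
  intro a b
  rcases h.hv a b with h0 | h2 | hL
  · exact Or.inl h0
  · exact Or.inr (Or.inl h2)
  · exact Or.inr (Or.inr (le_trans hLL hL))

lemma inv_zero (N L : ℕ) : Inv N L 0 (fun _ _ => 0) := by
  refine ⟨?_, ?_, ?_, ?_, ?_, ?_, ?_, ?_, ?_, ?_⟩ <;> intros <;> simp_all

/-- Inserting the letter 1 (encoded 2) into a stage-B tableau bumps the
count of 1's in the first row from `k` to `k+1`. -/
lemma insert_one {F N k : ℕ} {T : ℕ → ℕ → ℕ} (hI : Inv N 4 k T)
    (hk1 : 1 ≤ k) (hkN : k < N) :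
    Inv N 4 (k+1) (mixStep (F+1) N T true 0 2) := by
  have he2 : ∀ m, m < k → T 0 m = 2 := fun m hm => hI.e2 m hm (by omega)
  have hminz : ∀ m, 0 ≤ m → m < k → T 0 m ≠ 0 ∧ T 0 m ≤ 2 := by
    intro m _ hm; rw [he2 m hm]; omega
  rw [mixStep]
  split
  · rename_i hfind
    have hbnone := find?_range_noneP hfind
    have hzk : T 0 k = 0 := by
      by_contra hnz
      have h2k : T 0 k ≠ 2 := by
        intro h2; have := hI.e4 0 k h2; omega
      have h4k : 4 ≤ T 0 k := by
        rcases hI.hv 0 k with h | h | h <;> omega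
      exact hbnone k hkN ⟨by omega, hnz, by omega⟩
    split
    · rename_i hfind2
      exact absurd ⟨Nat.zero_le k, hzk⟩ (find?_range_noneP hfind2 k hkN)
    · rename_i j hfind2
      obtain ⟨hjN, hjp, hjmin⟩ := find?_range_someP hfind2
      have hjk : j = k := by
        rcases Nat.lt_trichotomy j k with hlt | he | hgt
        · have := he2 j hlt
          have := hjp.2
          omega
        · exact he
        · exact absurd ⟨Nat.zero_le k, hzk⟩ (hjmin k hgt)
      subst hjk
      exact inv_upd_row hI le_rfl hjN (by omega) (by omega)
        (Or.inr ⟨rfl, rfl, rfl, rfl⟩) hminz (Or.inl hjp.2) (fun h => absurd h (by omega))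
  · rename_i j hfind
    obtain ⟨hjN, hjp, hjmin⟩ := find?_range_someP hfind
    obtain ⟨-, hjnz, hj2⟩ := hjp
    have hjk : k = j := by
      symm
      have hkj : k ≤ j := by
        by_contra h
        push_neg at h
        have := he2 j h
        omega
      rcases Nat.eq_or_lt_of_le hkj with he | hlt
      · exact he.symm
      · exfalso
        have hknz : T 0 k ≠ 0 := row_nz hI j (by omega) (by omega) hjN hjnz
        have h2k : T 0 k ≠ 2 := by
          intro h2; have := hI.e4 0 k h2; omega
        have h4k : 4 ≤ T 0 k := by
          rcases hI.hv 0 k with h | h | h <;> omega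
        exact hjmin k hlt ⟨by omega, hknz, by omega⟩
    subst hjk
    have h2k : T 0 k ≠ 2 := by
      intro h2; have := hI.e4 0 k h2; omega
    have h4k : 4 ≤ T 0 k := by
      rcases hI.hv 0 k with h | h | h <;> omega
    rw [if_neg (by omega : ¬ k = 0)]
    have hI' : Inv N 4 (k+1) (upd2 T 0 k 2) :=
      inv_upd_row hI le_rfl hkN (by omega) (by omega)
        (Or.inr ⟨rfl, rfl, rfl, rfl⟩) hminz (Or.inr (by omega)) (fun h => absurd h (by omega))
    by_cases hpar : T 0 k % 2 = 0
    · rw [if_pos hpar]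
      refine core _ _ true _ _ le_rfl hI' ?_ (by simp)
      intro _
      refine ⟨hpar, h4k, h4k, Or.inr ⟨k, hk1, hkN, ?_, ?_, ?_⟩⟩
      · show upd2 T 0 k 2 (1-1) k ≠ 0
        have h10 : (1:ℕ) - 1 = 0 := rfl
        rw [h10, upd2_same]; omega
      · rw [upd2_ne T 0 k 2 1 k (by omega)]
        by_cases hz1 : T 1 k = 0
        · exact Or.inl hz1
        · right
          have := hI.ci 0 k hkN (by omega) hz1
          norm_num at this
          omega
      · intro m hm
        have h10 : (1:ℕ) - 1 = 0 := rfl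
        rw [h10]
        by_cases hmk : m = k
        · subst hmk
          rw [upd2_same]
          exact ⟨by omega, fun _ => by omega⟩
        · rw [upd2_ne T 0 k 2 0 m (by omega)]
          rw [he2 m (by omega)]
          exact ⟨by omega, fun _ => by omega⟩
    · rw [if_neg hpar]
      refine core _ _ false _ _ le_rfl hI' (by simp) ?_
      intro _
      refine ⟨by omega, by omega, by omega, by omega, ?_⟩
      intro hkN1
      refine ⟨0, by omega, ?_, ?_, ?_⟩
      · have hc1 : k + 1 - 1 = k := by omega
        rw [hc1, upd2_same]; omega
      · rw [upd2_ne T 0 k 2 0 (k+1) (by omega)]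
        by_cases hz1 : T 0 (k+1) = 0
        · exact Or.inl hz1
        · right
          have := hI.ri 0 k hkN1 (by omega) hz1
          omega
      · intro y hy
        have hy0 : y = 0 := by omega
        subst hy0
        have hc1 : k + 1 - 1 = k := by omega
        rw [hc1, upd2_same]
        exact ⟨by omega, fun h => by omega⟩

/-- Inserting the first 1 into a stage-A tableau. -/
lemma insert_first {F N : ℕ} {T : ℕ → ℕ → ℕ} (hI : Inv N 5 0 T) (hN : 0 < N) :
    Inv N 4 1 (mixStep (F+1) N T true 0 2) := by
  have hI4 : Inv N 4 0 T := inv_weaken hI (by omega)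
  have h2k : T 0 0 ≠ 2 := by
    intro h2; have := hI.e4 0 0 h2; omega
  rw [mixStep]
  split
  · rename_i hfind
    have hbnone := find?_range_noneP hfind
    have hz00 : T 0 0 = 0 := by
      by_contra hnz
      have h5 : 5 ≤ T 0 0 := by
        rcases hI.hv 0 0 with h | h | h <;> omega
      exact hbnone 0 hN ⟨le_rfl, hnz, by omega⟩
    split
    · rename_i hfind2
      exact absurd ⟨le_rfl, hz00⟩ (find?_range_noneP hfind2 0 hN)
    · rename_i j hfind2
      obtain ⟨hjN, hjp, hjmin⟩ := find?_range_someP hfind2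
      have hj0 : j = 0 := by
        by_contra hne
        exact hjmin 0 (by omega) ⟨le_rfl, hz00⟩
      subst hj0
      exact inv_upd_row hI4 le_rfl hjN le_rfl (by omega)
        (Or.inr ⟨rfl, rfl, rfl, rfl⟩) (fun m h1 h2 => absurd h2 (by omega))
        (Or.inl hjp.2) (fun h => absurd h (by omega))
  · rename_i j hfind
    obtain ⟨hjN, hjp, hjmin⟩ := find?_range_someP hfind
    obtain ⟨-, hjnz, hj2⟩ := hjp
    have hj0 : j = 0 := by
      by_contra hne
      have h0nz : T 0 0 ≠ 0 := row_nz hI j (by omega) (by omega) hjN hjnz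
      have h5 : 5 ≤ T 0 0 := by
        rcases hI.hv 0 0 with h | h | h <;> omega
      exact hjmin 0 (by omega) ⟨le_rfl, h0nz, by omega⟩
    subst hj0
    have h5 : 5 ≤ T 0 0 := by
      rcases hI.hv 0 0 with h | h | h <;> omega
    have hde : T 0 0 % 2 = 0 := hI.dg 0 hN
    rw [if_pos rfl]
    have hI' : Inv N 4 1 (upd2 T 0 0 2) :=
      inv_upd_row hI4 le_rfl hN le_rfl (by omega)
        (Or.inr ⟨rfl, rfl, rfl, rfl⟩) (fun m h1 h2 => absurd h2 (by omega))
        (Or.inr (by omega)) (fun h => absurd h (by omega))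
    refine core _ _ false _ _ le_rfl hI' (by simp) ?_
    intro _
    refine ⟨by omega, by omega, by omega, by omega, ?_⟩
    intro h1N
    refine ⟨0, by omega, ?_, ?_, ?_⟩
    · have hc1 : (0:ℕ) + 1 - 1 = 0 := rfl
      rw [hc1, upd2_same]; omega
    · rw [upd2_ne T 0 0 2 0 (0+1) (by omega)]
      by_cases hz1 : T 0 (0+1) = 0
      · exact Or.inl hz1
      · right
        have := hI.ri 0 0 h1N (by omega) hz1
        omega
    · intro y hy
      have hy0 : y = 0 := by omega
      subst hy0
      have hc1 : (0:ℕ) + 1 - 1 = 0 := rfl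
      rw [hc1, upd2_same]
      exact ⟨by omega, fun h => by omega⟩

/-- Folding stage A: letters ≥ 3 over a stage-A tableau. -/
lemma foldA {F N : ℕ} : ∀ (l : List ℕ) (T : ℕ → ℕ → ℕ), (∀ y ∈ l, 3 ≤ y) → Inv N 5 0 T →
    Inv N 5 0 (l.foldl (fun T v => mixStep F N T true 0 (2*v)) T) := by
  intro l
  induction l with
  | nil => intro T _ hI; simpa using hI
  | cons a l ih =>
    intro T hall hI
    rw [List.foldl_cons]
    refine ih _ (fun y hy => hall y (by simp [hy])) ?_
    refine core _ _ true _ _ (by omega) hI ?_ (by simp)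
    intro _
    have ha : 3 ≤ a := hall a (by simp)
    exact ⟨by omega, by omega, by omega, Or.inl rfl⟩

/-- Folding stage B: arbitrary letters ≥ 1. -/
lemma foldB {M N : ℕ} : ∀ (l : List ℕ) (T : ℕ → ℕ → ℕ) (k : ℕ), Inv N 4 k T → 1 ≤ k →
    (∀ y ∈ l, 1 ≤ y) → k + l.count 1 < N →
    Inv N 4 (k + l.count 1) (l.foldl (fun T v => mixStep (M+1) N T true 0 (2*v)) T) := by
  intro l
  induction l with
  | nil => intro T k hI _ _ _; simpa using hI
  | cons a l ih =>
    intro T k hI hk1 hall hcnt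
    rw [List.foldl_cons]
    by_cases ha1 : a = 1
    · subst ha1
      have hc : (1 :: l).count 1 = l.count 1 + 1 := by simp [List.count_cons]
      rw [hc] at hcnt ⊢
      have h1 : Inv N 4 (k+1) (mixStep (M+1) N T true 0 (2*1)) :=
        insert_one hI hk1 (by omega)
      have := ih _ (k+1) h1 (by omega) (fun y hy => hall y (by simp [hy])) (by omega)
      have harith : k + (l.count 1 + 1) = k + 1 + l.count 1 := by omega
      rw [harith]
      exact this
    · have hc : (a :: l).count 1 = l.count 1 := by simp [List.count_cons, ha1]
      rw [hc] at hcnt ⊢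
      have ha : 1 ≤ a := hall a (by simp)
      have ha2 : 2 ≤ a := by omega
      have h1 : Inv N 4 k (mixStep (M+1) N T true 0 (2*a)) := by
        refine core _ _ true _ _ le_rfl hI ?_ (by simp)
        intro _
        exact ⟨by omega, by omega, by omega, Or.inl rfl⟩
      exact ih _ k h1 hk1 (fun y hy => hall y (by simp [hy])) hcnt
lemma main_aux (p s : List ℕ) (N : ℕ) (hN : N = (p ++ 1 :: s).length + 2)
    (hp3 : ∀ y ∈ p, 3 ≤ y) (hs1 : ∀ y ∈ s, 1 ≤ y) :
    Inv N 4 (1 + s.count 1) (PHM (p ++ 1 :: s)) := by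
  obtain ⟨M, rfl⟩ : ∃ M, N = M + 1 := ⟨N - 1, by omega⟩
  have hPHM : PHM (p ++ 1 :: s) =
      s.foldl (fun T v => mixStep (M+1) (M+1) T true 0 (2*v))
        (mixStep (M+1) (M+1)
          (p.foldl (fun T v => mixStep (M+1) (M+1) T true 0 (2*v)) (fun _ _ => 0))
          true 0 (2*1)) := by
    unfold PHM
    rw [← hN, List.foldl_append, List.foldl_cons]
  rw [hPHM]
  have hA : Inv (M+1) 5 0
      (p.foldl (fun T v => mixStep (M+1) (M+1) T true 0 (2*v)) (fun _ _ => 0)) :=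
    foldA p _ hp3 (inv_zero (M+1) 5)
  have hT1 : Inv (M+1) 4 1
      (mixStep (M+1) (M+1)
        (p.foldl (fun T v => mixStep (M+1) (M+1) T true 0 (2*v)) (fun _ _ => 0))
        true 0 (2*1)) :=
    insert_first hA (by omega)
  have hcnt : 1 + s.count 1 < M + 1 := by
    have h1 : s.count 1 ≤ s.length := List.count_le_length
    have h2 : (p ++ 1 :: s).length = p.length + (s.length + 1) := by
      rw [List.length_append, List.length_cons]
    omega
  exact foldB s _ 1 hT1 le_rfl hs1 hcnt

end S10

/-- Let `b = p ++ 1 :: s` where `p` contains no `1` and no `2` (so the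
displayed `1` is the leftmost `1` of `b` and no `2` precedes it) and let
`i − 1` be the number of `1`'s in `s`.  If `i = 1`, the first row of
`P_HM(b)` starts with an unprimed `1` followed (if present) by an entry that
is at least `2` and is not `2′`; if `i ≥ 2`, it has exactly `i` unprimed `1`'s
in positions `(1,1),…,(1,i)` and the next entry (if present) is not `2′` (and
not another `1`). -/
theorem stmt10 (n : ℕ) (p s : List ℕ) (i : ℕ) (hi : 1 ≤ i)
    (hletters : ∀ x ∈ p ++ 1 :: s, 1 ≤ x ∧ x ≤ n)
    (hp1 : 1 ∉ p) (hp2 : 2 ∉ p) (hcount : s.count 1 = i - 1) :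
    (i = 1 → (PHM (p ++ 1 :: s)) 0 0 = 2 ∧
      ((PHM (p ++ 1 :: s)) 0 1 ≠ 0 → 4 ≤ (PHM (p ++ 1 :: s)) 0 1)) ∧
    (2 ≤ i → (∀ j, j < i → (PHM (p ++ 1 :: s)) 0 j = 2) ∧
      (PHM (p ++ 1 :: s)) 0 i ≠ 2 ∧ (PHM (p ++ 1 :: s)) 0 i ≠ 3) := by
  have hp3 : ∀ y ∈ p, 3 ≤ y := by
    intro y hy
    have h1 := (hletters y (by simp [hy])).1
    have hy1 : y ≠ 1 := by intro h; subst h; exact hp1 hy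
    have hy2 : y ≠ 2 := by intro h; subst h; exact hp2 hy
    omega
  have hs1 : ∀ y ∈ s, 1 ≤ y := by
    intro y hy; exact (hletters y (by simp [hy])).1
  have hB := S10.main_aux p s ((p ++ 1 :: s).length + 2) rfl hp3 hs1
  have hik : 1 + s.count 1 = i := by omega
  rw [hik] at hB
  have hiN : i < (p ++ 1 :: s).length + 2 := by
    have h1 : s.count 1 ≤ s.length := List.count_le_length
    have h2 : (p ++ 1 :: s).length = p.length + (s.length + 1) := by
      rw [List.length_append, List.length_cons]
    omega
  constructor
  · intro h1
    subst h1
    constructor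
    · exact hB.e2 0 (by omega) (by omega)
    · intro hne
      rcases hB.hv 0 1 with h | h | h
      · exact absurd h hne
      · exfalso; have := hB.e4 0 1 h; omega
      · exact h
  · intro h2i
    refine ⟨fun j hj => hB.e2 j hj (by omega), ?_, ?_⟩
    · intro h2; have := hB.e4 0 i h2; omega
    · intro h3
      rcases hB.hv 0 i with h | h | h <;> omega
end

section
/- In the q(n)-lowest weight primed tableau of shape λ — the tableau in which for each i the cells with entries (n−l+i) or (n−l+i)′ form a connected border strip of size λ_{l−i+1} starting at the diagonal cell (i,i) with unprimed value n−l+i (where l = l(λ)) — the entries are uniquely determined by these conditions, and the resulting filling is a valid primed tableau of shape λ with weight (0,…,0, λₗ, λ_{l−1}, …, λ₁). -/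
/-- Cell `(i,j)` (0-based) lies in the shifted diagram of the strict partition
`lam`: `i ≤ j < λᵢ + i`. -/
def InShape (lam : List ℕ) (i j : ℕ) : Prop :=
  i < lam.length ∧ i ≤ j ∧ j < lam.getD i 0 + i

instance (lam : List ℕ) (i j : ℕ) : Decidable (InShape lam i j) := by
  unfold InShape; infer_instance

/-- A strict partition: strictly decreasing list of positive integers. -/
def IsStrictPartition (lam : List ℕ) : Prop :=
  List.Chain' (· > ·) lam ∧ ∀ x ∈ lam, 0 < x

/-- A primed tableau of shape `lam` over `{1′ < 1 < 2′ < 2 < ⋯ < n}`.  The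
primed letter `k′` is encoded as `2k−1` and the unprimed letter `k` as `2k`
(so the order of letters is the order of the encodings); `T` is an arbitrary
function whose values off the shifted diagram are irrelevant.  Rows and
columns weakly increase, each row has at most one `k′`, each column has at
most one `k`, and diagonal entries are unprimed. -/
def IsPrimedTableau (n : ℕ) (lam : List ℕ) (T : ℕ → ℕ → ℕ) : Prop :=
  (∀ i j, InShape lam i j → 1 ≤ T i j ∧ T i j ≤ 2 * n) ∧
  (∀ i j, InShape lam i j → InShape lam i (j + 1) → T i j ≤ T i (j + 1)) ∧
  (∀ i j, InShape lam i j → InShape lam (i + 1) j → T i j ≤ T (i + 1) j) ∧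
  (∀ i j j' k, InShape lam i j → InShape lam i j' →
    T i j = 2 * k + 1 → T i j' = 2 * k + 1 → j = j') ∧
  (∀ i i' j k, InShape lam i j → InShape lam i' j →
    T i j = 2 * k + 2 → T i' j = 2 * k + 2 → i = i') ∧
  (∀ i, InShape lam i i → T i i % 2 = 0)

/-- The cells of the shifted diagram of `lam`, as a finite set. -/
def cells (lam : List ℕ) : Finset (ℕ × ℕ) :=
  (Finset.range lam.length ×ˢ Finset.range (lam.foldr max 0 + lam.length)).filter
    fun p => InShape lam p.1 p.2

/-- The number of entries of `T` equal to `k` or `k′`. -/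
def wtPT (lam : List ℕ) (T : ℕ → ℕ → ℕ) (k : ℕ) : ℕ :=
  ((cells lam).filter fun p => T p.1 p.2 = 2 * k - 1 ∨ T p.1 p.2 = 2 * k).card

/-- Two cells are edge-adjacent. -/
def Adj (p q : ℕ × ℕ) : Prop :=
  (p.1 = q.1 ∧ (p.2 + 1 = q.2 ∨ q.2 + 1 = p.2)) ∨
  (p.2 = q.2 ∧ (p.1 + 1 = q.1 ∨ q.1 + 1 = p.1))

/-- A set of cells is edge-connected. -/
def ConnectedSet (S : Finset (ℕ × ℕ)) : Prop :=
  ∀ p ∈ S, ∀ q ∈ S,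
    Relation.ReflTransGen (fun a b => a ∈ S ∧ b ∈ S ∧ Adj a b) p q

/-- A set of cells contains no `2 × 2` square (border strip condition). -/
def No2x2 (S : Finset (ℕ × ℕ)) : Prop :=
  ∀ i j, ¬((i, j) ∈ S ∧ (i + 1, j) ∈ S ∧ (i, j + 1) ∈ S ∧ (i + 1, j + 1) ∈ S)

/-- The cells of `T` whose letter (primed or not) is `k`. -/
def letterCells (lam : List ℕ) (T : ℕ → ℕ → ℕ) (k : ℕ) : Finset (ℕ × ℕ) :=
  (cells lam).filter fun p => T p.1 p.2 = 2 * k - 1 ∨ T p.1 p.2 = 2 * k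

/-- `T` is the `q(n)`-lowest weight primed tableau of shape `lam`: a primed
tableau such that for each `1 ≤ i ≤ l = l(lam)`, the cells with letter
`n − l + i` (primed or unprimed) form a connected border strip of size
`λ_{l−i+1}` starting at the diagonal cell `(i,i)` with unprimed entry
`n − l + i` there.  (Cells are 0-based.) -/
def IsLowestPT (n : ℕ) (lam : List ℕ) (T : ℕ → ℕ → ℕ) : Prop :=
  IsPrimedTableau n lam T ∧
  ∀ i, 1 ≤ i → i ≤ lam.length →
    (letterCells lam T (n - lam.length + i)).card = lam.getD (lam.length - i) 0 ∧
    ConnectedSet (letterCells lam T (n - lam.length + i)) ∧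
    No2x2 (letterCells lam T (n - lam.length + i)) ∧
    (i - 1, i - 1) ∈ letterCells lam T (n - lam.length + i) ∧
    T (i - 1) (i - 1) = 2 * (n - lam.length + i)

namespace Stmt15

def mm (lam : List ℕ) (t : ℕ) : ℕ := lam.countP (fun x => decide (t < x))

lemma mm_le (lam : List ℕ) (t : ℕ) : mm lam t ≤ lam.length := List.countP_le_length

lemma mm_anti (lam : List ℕ) {t s : ℕ} (h : t ≤ s) : mm lam s ≤ mm lam t := by
  induction lam with
  | nil => simp [mm]
  | cons a tl ih =>
    simp only [mm, List.countP_cons] at *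
    by_cases hs : s < a
    · have : t < a := lt_of_le_of_lt h hs
      simp [hs, this]; omega
    · by_cases ht : t < a <;> simp [hs, ht] <;> omega

lemma mm_zero (lam : List ℕ) (hpos : ∀ x ∈ lam, 0 < x) : mm lam 0 = lam.length := by
  rw [mm, List.countP_eq_length]
  intro a ha; simpa using hpos a ha

lemma mm_succ_le (lam : List ℕ) (hp : lam.Pairwise (· > ·)) (t : ℕ) :
    mm lam t ≤ mm lam (t + 1) + 1 := by
  induction lam with
  | nil => simp [mm]
  | cons a tl ih =>
    have hp' := List.pairwise_cons.mp hp
    have ih' := ih hp'.2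
    simp only [mm, List.countP_cons] at *
    by_cases h1 : t + 1 < a
    · have : t < a := by omega
      simp [h1, this]; omega
    · by_cases h2 : t < a
      · -- a = t + 1, so all of tl are < a = t+1, hence ≤ t : countP tl t = 0
        have h0 : tl.countP (fun x => decide (t < x)) = 0 := by
          rw [List.countP_eq_zero]
          intro x hx
          have := hp'.1 x hx
          simp only [decide_eq_true_eq]; omega
        simp [h1, h2, h0]
      · simp [h1, h2]; omega

lemma mm_spec (lam : List ℕ) (hp : lam.Pairwise (· > ·)) (t j : ℕ) (hj : j < lam.length) :
    t < lam.getD j 0 ↔ j < mm lam t := by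
  induction lam generalizing j with
  | nil => simp at hj
  | cons a tl ih =>
    have hp' := List.pairwise_cons.mp hp
    match j with
    | 0 =>
      simp only [List.getD_cons_zero, mm, List.countP_cons]
      by_cases ha : t < a
      · simp [ha]
      · have h0 : tl.countP (fun x => decide (t < x)) = 0 := by
          rw [List.countP_eq_zero]
          intro x hx
          have := hp'.1 x hx
          simp only [decide_eq_true_eq]; omega
        simp [ha, h0]
    | j + 1 =>
      have hj' : j < tl.length := by simpa using hj
      have := ih hp'.2 _ hj'
      rw [List.getD_cons_succ]
      simp only [mm, List.countP_cons] at *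
      by_cases ha : t < a
      · rw [if_pos (by simpa using ha)]; omega
      · have h0 : tl.countP (fun x => decide (t < x)) = 0 := by
          rw [List.countP_eq_zero]
          intro x hx
          have := hp'.1 x hx
          simp only [decide_eq_true_eq]; omega
        have hx : tl.getD j 0 ∈ tl := by
          rw [List.getD_eq_getElem _ _ hj']; exact List.getElem_mem _
        have h2 := hp'.1 _ hx
        rw [if_neg (by simpa using ha)]
        omega

lemma getD_strict (lam : List ℕ) (hp : lam.Pairwise (· > ·)) {j j' : ℕ}
    (h : j < j') (hj' : j' < lam.length) : lam.getD j' 0 < lam.getD j 0 := by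
  have hj : j < lam.length := lt_trans h hj'
  rw [List.getD_eq_getElem _ _ hj, List.getD_eq_getElem _ _ hj']
  exact List.pairwise_iff_get.mp hp ⟨j, hj⟩ ⟨j', hj'⟩ h

lemma getD_anti (lam : List ℕ) (hp : lam.Pairwise (· > ·)) {j j' : ℕ}
    (h : j ≤ j') : lam.getD j' 0 ≤ lam.getD j 0 := by
  rcases eq_or_lt_of_le h with rfl | h
  · exact le_refl _
  · by_cases hj' : j' < lam.length
    · exact le_of_lt (getD_strict lam hp h hj')
    · rw [List.getD_eq_default _ _ (not_lt.mp hj')]; exact Nat.zero_le _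

lemma getD_pos (lam : List ℕ) (hpos : ∀ x ∈ lam, 0 < x) {j : ℕ} (hj : j < lam.length) :
    0 < lam.getD j 0 := by
  rw [List.getD_eq_getElem _ _ hj]
  exact hpos _ (List.getElem_mem _)

def letterF (n : ℕ) (lam : List ℕ) (r c : ℕ) : ℕ := n + 1 + r - mm lam (c - r)

def PF (lam : List ℕ) (r c : ℕ) : Prop :=
  InShape lam (r+1) c ∧ mm lam (c - r - 1) = mm lam (c - r) + 1

instance (lam : List ℕ) (r c : ℕ) : Decidable (PF lam r c) := by
  unfold PF; infer_instance

def T0 (n : ℕ) (lam : List ℕ) (r c : ℕ) : ℕ :=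
  2 * letterF n lam r c - if PF lam r c then 1 else 0

variable {n : ℕ} {lam : List ℕ}

lemma mm_lb (hp : lam.Pairwise (· > ·)) {r c : ℕ} (hin : InShape lam r c) :
    r < mm lam (c - r) := by
  obtain ⟨h1, h2, h3⟩ := hin
  exact (mm_spec lam hp (c - r) r h1).mp (by omega)

lemma letterF_le_iff (hp : lam.Pairwise (· > ·)) (hln : lam.length ≤ n)
    {r c : ℕ} (hin : InShape lam r c) {i : ℕ} (hi : i ≤ lam.length) :
    letterF n lam r c ≤ n - lam.length + i ↔ c - r < lam.getD (lam.length - i + r) 0 := by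
  have hlb := mm_lb hp hin
  have hub := mm_le lam (c - r)
  rw [letterF]
  constructor
  · intro h
    have h2 : lam.length - i + r < mm lam (c - r) := by omega
    have h3 : lam.length - i + r < lam.length := by omega
    exact (mm_spec lam hp _ _ h3).mpr h2
  · intro h
    have h3 : lam.length - i + r < lam.length := by
      by_contra hc
      rw [List.getD_eq_default _ _ (not_lt.mp hc)] at h; omega
    have h2 := (mm_spec lam hp (c - r) _ h3).mp h
    omega

lemma letterF_lb (hp : lam.Pairwise (· > ·)) (hln : lam.length ≤ n)
    {r c : ℕ} (hin : InShape lam r c) :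
    n - lam.length + r + 1 ≤ letterF n lam r c ∧ letterF n lam r c ≤ n := by
  have hlb := mm_lb hp hin
  have hub := mm_le lam (c - r)
  rw [letterF]; omega

lemma letterF_eq_iff (hp : lam.Pairwise (· > ·)) (hln : lam.length ≤ n)
    {r c : ℕ} (hin : InShape lam r c) {i : ℕ} (hi1 : 1 ≤ i) (hi : i ≤ lam.length) :
    letterF n lam r c = n - lam.length + i ↔
      lam.getD (lam.length - i + 1 + r) 0 ≤ c - r ∧ c - r < lam.getD (lam.length - i + r) 0 := by
  have e1 := letterF_le_iff hp hln hin hi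
  have e2 := letterF_le_iff hp hln hin (show i - 1 ≤ lam.length by omega)
  have hlb := (letterF_lb hp hln hin).1
  have hub := (letterF_lb hp hln hin).2
  have hidx : lam.length - (i - 1) + r = lam.length - i + 1 + r := by omega
  rw [hidx] at e2
  omega

variable {n : ℕ} {lam : List ℕ}

lemma le_foldr_max {x : ℕ} (hx : x ∈ lam) : x ≤ lam.foldr max 0 := by
  induction lam with
  | nil => simp at hx
  | cons a tl ih =>
    simp only [List.foldr_cons]
    rcases List.mem_cons.mp hx with rfl | h
    · exact le_max_left _ _
    · exact le_trans (ih h) (le_max_right _ _)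

lemma mem_cells (p : ℕ × ℕ) : p ∈ cells lam ↔ InShape lam p.1 p.2 := by
  unfold cells
  simp only [Finset.mem_filter, Finset.mem_product, Finset.mem_range]
  constructor
  · tauto
  · intro h
    refine ⟨⟨h.1, ?_⟩, h⟩
    have h1 := h.1
    have h3 := h.2.2
    have h4 : lam.getD p.1 0 ≤ lam.foldr max 0 := by
      apply le_foldr_max
      rw [List.getD_eq_getElem _ _ h.1]; exact List.getElem_mem _
    omega

lemma getD_add_le (hp : lam.Pairwise (· > ·)) {r d : ℕ} (h : r + d < lam.length) :
    lam.getD (r + d) 0 + d ≤ lam.getD r 0 := by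
  induction d with
  | zero => simp
  | succ d ih =>
    have h1 : r + d < lam.length := by omega
    have h2 := getD_strict lam hp (show r + d < r + (d+1) by omega) (by omega)
    have := ih h1
    omega

lemma inShape_up (hp : lam.Pairwise (· > ·)) {r c : ℕ} (h : InShape lam (r+1) c) :
    InShape lam r c := by
  obtain ⟨h1, h2, h3⟩ := h
  have := getD_add_le hp (show r + 1 < lam.length by omega)
  exact ⟨by omega, by omega, by omega⟩

lemma inShape_left {r c : ℕ} (h : InShape lam r (c+1)) (hc : r ≤ c) : InShape lam r c := by
  obtain ⟨h1, h2, h3⟩ := h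
  exact ⟨h1, hc, by omega⟩

lemma inShape_col (hp : lam.Pairwise (· > ·)) {r r' c : ℕ} (h : InShape lam r' c)
    (hr : r ≤ r') : InShape lam r c := by
  induction r' with
  | zero => cases Nat.le_zero.mp hr; exact h
  | succ m ih =>
    rcases Nat.lt_or_ge r (m+1) with h1 | h1
    · exact ih (inShape_up hp h) (by omega)
    · have : r = m + 1 := by omega
      subst this; exact h

lemma inShape_row {r c c' : ℕ} (h : InShape lam r c') (hc : r ≤ c) (hc' : c ≤ c') :
    InShape lam r c := by
  obtain ⟨h1, h2, h3⟩ := h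
  exact ⟨h1, hc, by omega⟩

lemma T0_val_of_PF (h : PF lam r c) : T0 n lam r c = 2 * letterF n lam r c - 1 := by
  rw [T0, if_pos h]

lemma T0_val_of_not_PF (h : ¬ PF lam r c) : T0 n lam r c = 2 * letterF n lam r c := by
  rw [T0, if_neg h]; omega

lemma T0_letter_iff (hp : lam.Pairwise (· > ·)) (hln : lam.length ≤ n)
    {r c : ℕ} (hin : InShape lam r c) (k : ℕ) :
    (T0 n lam r c = 2 * k - 1 ∨ T0 n lam r c = 2 * k) ↔ letterF n lam r c = k := by
  have h1 : 1 ≤ letterF n lam r c := by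
    have := (letterF_lb hp hln hin).1
    have := mm_le lam (c - r)
    omega
  by_cases h : PF lam r c
  · rw [T0_val_of_PF h]; omega
  · rw [T0_val_of_not_PF h]; omega

lemma mem_strip_T0 (hp : lam.Pairwise (· > ·)) (hln : lam.length ≤ n)
    {i : ℕ} (hi1 : 1 ≤ i) (hi : i ≤ lam.length) (p : ℕ × ℕ) :
    p ∈ letterCells lam (T0 n lam) (n - lam.length + i) ↔
      InShape lam p.1 p.2 ∧ lam.getD (lam.length - i + 1 + p.1) 0 ≤ p.2 - p.1 ∧
        p.2 - p.1 < lam.getD (lam.length - i + p.1) 0 := by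
  unfold letterCells
  rw [Finset.mem_filter, mem_cells]
  constructor
  · rintro ⟨h1, h2⟩
    refine ⟨h1, ?_⟩
    exact (letterF_eq_iff hp hln h1 hi1 hi).mp ((T0_letter_iff hp hln h1 _).mp h2)
  · rintro ⟨h1, h2⟩
    exact ⟨h1, (T0_letter_iff hp hln h1 _).mpr ((letterF_eq_iff hp hln h1 hi1 hi).mpr h2)⟩

lemma strip_card (hp : lam.Pairwise (· > ·)) (hpos : ∀ x ∈ lam, 0 < x) (hln : lam.length ≤ n)
    {i : ℕ} (hi1 : 1 ≤ i) (hi : i ≤ lam.length) :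
    (letterCells lam (T0 n lam) (n - lam.length + i)).card =
      lam.getD (lam.length - i) 0 := by
  rw [← Finset.card_range (lam.getD (lam.length - i) 0)]
  apply Finset.card_nbij' (fun p => p.2 - p.1)
      (fun v => (mm lam v + i - lam.length - 1, v + (mm lam v + i - lam.length - 1)))
  · intro p hp2
    rw [Finset.mem_coe, mem_strip_T0 hp hln hi1 hi] at hp2
    obtain ⟨hin, h2, h3⟩ := hp2
    rw [Finset.mem_coe, Finset.mem_range]
    calc p.2 - p.1 < lam.getD (lam.length - i + p.1) 0 := h3
      _ ≤ lam.getD (lam.length - i) 0 := getD_anti lam hp (by omega)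
  · intro v hv
    rw [Finset.mem_coe, Finset.mem_range] at hv
    set L := lam.length with hL
    have hLi : L - i < L := by
      by_contra hc
      rw [List.getD_eq_default _ _ (not_lt.mp hc)] at hv; omega
    have hmv1 : L - i < mm lam v := (mm_spec lam hp v _ hLi).mp hv
    have hmv2 : mm lam v ≤ L := mm_le lam v
    set r := mm lam v + i - L - 1 with hr
    have hri : r < i := by omega
    have hidx : L - i + r = mm lam v - 1 := by omega
    have hidxlt : L - i + r < L := by omega
    have hv2 : v < lam.getD (L - i + r) 0 := by
      rw [hidx]
      exact (mm_spec lam hp v _ (by omega)).mpr (by omega)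
    have hin : InShape lam r (v + r) := by
      refine ⟨by omega, by omega, ?_⟩
      have := getD_anti lam hp (show r ≤ L - i + r by omega)
      omega
    rw [Finset.mem_coe, mem_strip_T0 hp hln hi1 hi]
    refine ⟨hin, ?_, ?_⟩
    · simp only
      have hsub : v + r - r = v := by omega
      rw [hsub]
      have hidx2 : L - i + 1 + r = mm lam v := by omega
      rw [hidx2]
      by_cases hmm : mm lam v < L
      · by_contra hc
        push_neg at hc
        have := (mm_spec lam hp v (mm lam v) hmm).mp hc
        omega
      · rw [List.getD_eq_default _ _ (by omega)]; omega
    · simp only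
      have hsub : v + r - r = v := by omega
      rw [hsub]; exact hv2
  · intro p hp2
    rw [Finset.mem_coe, mem_strip_T0 hp hln hi1 hi] at hp2
    obtain ⟨hin, h2, h3⟩ := hp2
    set L := lam.length with hL
    have hin1 := hin.1
    have hin2 := hin.2.1
    have hidxlt : L - i + p.1 < L := by
      by_contra hc
      rw [List.getD_eq_default _ _ (not_lt.mp hc)] at h3; omega
    -- mm lam (p.2 - p.1) = L - i + p.1 + 1
    have hmm1 : L - i + p.1 < mm lam (p.2 - p.1) := (mm_spec lam hp _ _ hidxlt).mp h3
    have hmm2 : mm lam (p.2 - p.1) ≤ L - i + p.1 + 1 := by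
      by_contra hc
      push_neg at hc
      have hlt : L - i + 1 + p.1 < L := by
        have := mm_le lam (p.2 - p.1); omega
      have := (mm_spec lam hp (p.2 - p.1) _ hlt).mpr (by omega)
      omega
    have : mm lam (p.2 - p.1) = L - i + p.1 + 1 := by omega
    have hri : i ≤ L := hi
    ext
    · simp; omega
    · simp; omega
  · intro v hv
    simp only
    omega

lemma strip_no2x2 (hp : lam.Pairwise (· > ·)) (hln : lam.length ≤ n)
    {i : ℕ} (hi1 : 1 ≤ i) (hi : i ≤ lam.length) :
    No2x2 (letterCells lam (T0 n lam) (n - lam.length + i)) := by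
  intro r c ⟨h1, h2, h3, h4⟩
  rw [mem_strip_T0 hp hln hi1 hi] at h1 h4
  have e1 := h1.2.1
  have e4 := h4.2.2
  have hc := h1.1.2.1
  simp only at e1 e4 hc
  have hidx : lam.length - i + 1 + r = lam.length - i + (r + 1) := by omega
  rw [← hidx] at e4
  omega

variable {n : ℕ} {lam : List ℕ}

lemma adj_symm {p q : ℕ × ℕ} (h : Adj p q) : Adj q p := by
  unfold Adj at h ⊢; omega

lemma R_symm {S : Finset (ℕ × ℕ)} :
    Symmetric (fun a b => a ∈ S ∧ b ∈ S ∧ Adj a b) := by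
  intro a b ⟨h1, h2, h3⟩; exact ⟨h2, h1, adj_symm h3⟩

lemma strip_diag_mem (hp : lam.Pairwise (· > ·)) (hpos : ∀ x ∈ lam, 0 < x)
    (hln : lam.length ≤ n) {i : ℕ} (hi1 : 1 ≤ i) (hi : i ≤ lam.length) :
    (i - 1, i - 1) ∈ letterCells lam (T0 n lam) (n - lam.length + i) := by
  have hL : 1 ≤ lam.length := le_trans hi1 hi
  have h1 : lam.length - i + 1 + (i - 1) = lam.length := by omega
  have h2 : lam.length - i + (i - 1) = lam.length - 1 := by omega
  have h3 := getD_pos lam hpos (show i - 1 < lam.length by omega)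
  have h4 := getD_pos lam hpos (show lam.length - 1 < lam.length by omega)
  rw [mem_strip_T0 hp hln hi1 hi]
  simp only
  rw [h1, h2, List.getD_eq_default _ _ (le_refl _)]
  exact ⟨⟨by omega, le_refl _, by omega⟩, by omega, by omega⟩

lemma strip_connected (hp : lam.Pairwise (· > ·)) (hpos : ∀ x ∈ lam, 0 < x)
    (hln : lam.length ≤ n) {i : ℕ} (hi1 : 1 ≤ i) (hi : i ≤ lam.length) :
    ConnectedSet (letterCells lam (T0 n lam) (n - lam.length + i)) := by
  set S := letterCells lam (T0 n lam) (n - lam.length + i) with hS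
  have memS : ∀ a b : ℕ, (a, b) ∈ S ↔ InShape lam a b ∧
      lam.getD (lam.length - i + 1 + a) 0 ≤ b - a ∧
      b - a < lam.getD (lam.length - i + a) 0 := by
    intro a b
    simpa using mem_strip_T0 hp hln hi1 hi (a, b)
  set R := fun a b => a ∈ S ∧ b ∈ S ∧ Adj a b with hR
  have key : ∀ N : ℕ, ∀ r c, (r, c) ∈ S → c + (i - 1 - r) ≤ N →
      Relation.ReflTransGen R (r, c) (i - 1, i - 1) := by
    intro N
    induction N using Nat.strong_induction_on with
    | _ N IH =>
      intro r c hpS hmeas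
      obtain ⟨hin, hbnd, hmu⟩ := (memS r c).mp hpS
      obtain ⟨hr1, hr2, hr3⟩ := hin
      by_cases hc : lam.getD (lam.length - i + 1 + r) 0 < c - r
      · -- move left
        have hq : (r, c - 1) ∈ S := by
          rw [memS]
          exact ⟨⟨hr1, by omega, by omega⟩, by omega, by omega⟩
        have hadj : Adj (r, c) (r, c - 1) := by
          unfold Adj
          left
          refine ⟨rfl, Or.inr ?_⟩
          show c - 1 + 1 = c
          omega
        have hrec := IH (N - 1) (by omega) r (c - 1) hq (by omega)
        exact Relation.ReflTransGen.head ⟨hpS, hq, hadj⟩ hrec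
      · by_cases hb0 : lam.getD (lam.length - i + 1 + r) 0 = 0
        · -- at the diagonal cell
          have hri : r < i := by
            by_contra hcon
            rw [List.getD_eq_default _ _ (show lam.length ≤ lam.length - i + r by omega)] at hmu
            omega
          have hrge : i - 1 ≤ r := by
            by_contra hcon
            have := getD_pos lam hpos (show lam.length - i + 1 + r < lam.length by omega)
            omega
          have hre : r = i - 1 := by omega
          have hce : c = r := by omega
          rw [hre] at hce
          rw [hre, hce]
        · -- move down
          have hblt : lam.length - i + 1 + r < lam.length := by
            by_contra hcon
            rw [List.getD_eq_default _ _ (by omega)] at hb0; omega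
          have hri : r + 1 < i := by omega
          have hceq : c - r = lam.getD (lam.length - i + 1 + r) 0 := by omega
          have hidx : lam.length - i + (r + 1) = lam.length - i + 1 + r := by omega
          have hbnext : lam.getD (lam.length - i + 1 + (r + 1)) 0 ≤
              lam.getD (lam.length - i + 1 + r) 0 - 1 := by
            by_cases h2 : lam.length - i + 1 + (r + 1) < lam.length
            · have := getD_strict lam hp
                (show lam.length - i + 1 + r < lam.length - i + 1 + (r+1) by omega) h2
              omega
            · rw [List.getD_eq_default _ _ (by omega)]; omega
          have hgd : lam.getD (lam.length - i + 1 + r) 0 ≤ lam.getD (r + 1) 0 :=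
            getD_anti lam hp (by omega)
          have hq : (r + 1, c) ∈ S := by
            rw [memS, hidx]
            exact ⟨⟨by omega, by omega, by omega⟩, by omega, by omega⟩
          have hadj : Adj (r, c) (r + 1, c) := by
            unfold Adj
            right
            exact ⟨rfl, Or.inl rfl⟩
          have hrec := IH (N - 1) (by omega) (r + 1) c hq (by omega)
          exact Relation.ReflTransGen.head ⟨hpS, hq, hadj⟩ hrec
  intro p hpS q hqS
  have h1 := key (p.2 + (i - 1 - p.1)) p.1 p.2 (by rwa [Prod.mk.eta]) (le_refl _)
  have h2 := key (q.2 + (i - 1 - q.1)) q.1 q.2 (by rwa [Prod.mk.eta]) (le_refl _)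
  rw [Prod.mk.eta] at h1 h2
  exact h1.trans ((@Relation.ReflTransGen.stdSymm _ _ ⟨R_symm⟩).symm _ _ h2)

lemma letterF_row_mono {r c c' : ℕ} (h : c ≤ c') :
    letterF n lam r c ≤ letterF n lam r c' := by
  have := mm_anti lam (show c - r ≤ c' - r by omega)
  rw [letterF, letterF]; omega

lemma mm_col_step (hp : lam.Pairwise (· > ·)) {r c : ℕ} (h : r + 1 ≤ c) :
    mm lam (c - r) ≤ mm lam (c - r - 1) ∧ mm lam (c - r - 1) ≤ mm lam (c - r) + 1 := by
  constructor
  · exact mm_anti lam (by omega)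
  · have := mm_succ_le lam hp (c - r - 1)
    have hidx : c - r - 1 + 1 = c - r := by omega
    rw [hidx] at this; exact this

lemma letterF_col_step (hp : lam.Pairwise (· > ·)) {r c : ℕ} (h : r + 1 ≤ c)
    (hmm : mm lam (c - r) ≤ n + 1 + r) :
    letterF n lam r c ≤ letterF n lam (r + 1) c ∧
      letterF n lam (r + 1) c ≤ letterF n lam r c + 1 := by
  obtain ⟨h1, h2⟩ := mm_col_step hp h
  have hidx : c - (r + 1) = c - r - 1 := by omega
  rw [letterF, letterF, hidx]
  omega

lemma letterF_col_mono (hp : lam.Pairwise (· > ·)) (hln : lam.length ≤ n)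
    {a a' j : ℕ} (hle : a ≤ a') (h : InShape lam a' j) :
    letterF n lam a j ≤ letterF n lam a' j := by
  induction a' with
  | zero =>
    have : a = 0 := by omega
    rw [this]
  | succ m ih =>
    rcases Nat.lt_or_ge a (m + 1) with h1 | h1
    · have hup := inShape_up hp h
      have hih := ih (by omega) hup
      have hle2 : m + 1 ≤ j := h.2.1
      have hmm : mm lam (j - m) ≤ n + 1 + m := by
        have := mm_le lam (j - m); omega
      have hstep := (letterF_col_step (n := n) hp (show m + 1 ≤ j from hle2) hmm).1
      omega
    · have : a = m + 1 := by omega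
      rw [this]

lemma T0_isPT (hp : lam.Pairwise (· > ·)) (hpos : ∀ x ∈ lam, 0 < x)
    (hln : lam.length ≤ n) : IsPrimedTableau n lam (T0 n lam) := by
  have hletter : ∀ r c, InShape lam r c →
      1 ≤ letterF n lam r c ∧ letterF n lam r c ≤ n := by
    intro r c hin
    have := letterF_lb hp hln hin
    omega
  refine ⟨?_, ?_, ?_, ?_, ?_, ?_⟩
  · -- bounds
    intro r c hin
    have h1 := hletter r c hin
    rcases (em (PF lam r c)) with h | h
    · rw [T0_val_of_PF h] <;> omega
    · rw [T0_val_of_not_PF h] <;> omega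
  · -- rows weakly increase
    intro r c hin hin'
    have hmono := letterF_row_mono (n := n) (lam := lam) (r := r) (show c ≤ c + 1 by omega)
    rcases Nat.lt_or_ge (letterF n lam r c) (letterF n lam r (c+1)) with hlt | hge
    · have h1 := hletter r c hin
      have h2 := hletter r (c+1) hin'
      have hub : T0 n lam r c ≤ 2 * letterF n lam r c := by
        rcases (em (PF lam r c)) with h | h
        · rw [T0_val_of_PF h] <;> omega
        · rw [T0_val_of_not_PF h] <;> omega
      have hlb : 2 * letterF n lam r (c+1) - 1 ≤ T0 n lam r (c+1) := by
        rcases (em (PF lam r (c+1))) with h | h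
        · rw [T0_val_of_PF h] <;> omega
        · rw [T0_val_of_not_PF h] <;> omega
      omega
    · have heq : letterF n lam r c = letterF n lam r (c+1) := by omega
      have hnp : ¬ PF lam r (c+1) := by
        rintro ⟨hsh, hmmq⟩
        have hrc : r ≤ c := hin.2.1
        have hidx : c + 1 - r - 1 = c - r := by omega
        rw [hidx] at hmmq
        have hb1 := mm_le lam (c - r)
        have hb2 := mm_le lam (c + 1 - r)
        rw [letterF, letterF] at heq
        omega
      rw [T0_val_of_not_PF hnp, ← heq]
      rcases (em (PF lam r c)) with h | h
      · rw [T0_val_of_PF h] <;> omega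
      · rw [T0_val_of_not_PF h] <;> omega
  · -- columns weakly increase
    intro r c hin hin'
    have hle : r + 1 ≤ c := hin'.2.1
    have hmm : mm lam (c - r) ≤ n + 1 + r := by
      have := mm_le lam (c - r); omega
    obtain ⟨hs1, hs2⟩ := letterF_col_step (n := n) hp hle hmm
    obtain ⟨hm1, hm2⟩ := mm_col_step hp hle
    rcases Nat.lt_or_ge (letterF n lam r c) (letterF n lam (r+1) c) with hlt | hge
    · have h1 := hletter r c hin
      have h2 := hletter (r+1) c hin'
      have hub : T0 n lam r c ≤ 2 * letterF n lam r c := by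
        rcases (em (PF lam r c)) with h | h
        · rw [T0_val_of_PF h] <;> omega
        · rw [T0_val_of_not_PF h] <;> omega
      have hlb : 2 * letterF n lam (r+1) c - 1 ≤ T0 n lam (r+1) c := by
        rcases (em (PF lam (r+1) c)) with h | h
        · rw [T0_val_of_PF h] <;> omega
        · rw [T0_val_of_not_PF h] <;> omega
      omega
    · have heq : letterF n lam r c = letterF n lam (r+1) c := by omega
      have hPF : PF lam r c := by
        refine ⟨hin', ?_⟩
        rw [letterF, letterF] at heq
        have hidx : c - (r + 1) = c - r - 1 := by omega
        rw [hidx] at heq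
        have hb1 := mm_le lam (c - r)
        have hb2 := mm_le lam (c - r - 1)
        omega
      rw [T0_val_of_PF hPF]
      have h1 := hletter r c hin
      have hlb : 2 * letterF n lam (r+1) c - 1 ≤ T0 n lam (r+1) c := by
        rcases (em (PF lam (r+1) c)) with h | h
        · rw [T0_val_of_PF h] <;> omega
        · rw [T0_val_of_not_PF h] <;> omega
      omega
  · -- at most one primed per row
    intro r j j' k hin hin' hv hv'
    have odd_PF : ∀ c, InShape lam r c → T0 n lam r c = 2 * k + 1 →
        PF lam r c ∧ letterF n lam r c = k + 1 := by
      intro c hc hval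
      have h1 := hletter r c hc
      rcases (em (PF lam r c)) with h | h
      · rw [T0_val_of_PF h] at hval; exact ⟨h, by omega⟩
      · rw [T0_val_of_not_PF h] at hval; omega
    by_contra hne
    -- wlog j < j'
    have main : ∀ a b, InShape lam r a → InShape lam r b → a < b →
        T0 n lam r a = 2 * k + 1 → T0 n lam r b = 2 * k + 1 → False := by
      intro a b hina hinb hab hva hvb
      obtain ⟨hPa, hla⟩ := odd_PF a hina hva
      obtain ⟨hPb, hlb⟩ := odd_PF b hinb hvb
      have hinb1 : InShape lam r (b - 1) := inShape_row hinb (by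
        have := hina.2.1; omega) (by omega)
      have h1 : letterF n lam r a ≤ letterF n lam r (b-1) := letterF_row_mono (by omega)
      have h2 : letterF n lam r (b-1) ≤ letterF n lam r b := letterF_row_mono (by omega)
      have heq : letterF n lam r (b-1) = letterF n lam r b := by omega
      obtain ⟨hsh, hmmq⟩ := hPb
      have hra : r ≤ a := hina.2.1
      have hidx : b - r - 1 = b - 1 - r := by omega
      rw [hidx] at hmmq
      rw [letterF, letterF] at heq
      have hb1 := mm_le lam (b - 1 - r)
      have hb2 := mm_le lam (b - r)
      omega
    rcases Nat.lt_trichotomy j j' with h | h | h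
    · exact main j j' hin hin' h hv hv'
    · exact hne h
    · exact main j' j hin' hin h hv' hv
  · -- at most one unprimed per column
    intro a a' j k hin hin' hv hv'
    have even_char : ∀ r, InShape lam r j → T0 n lam r j = 2 * k + 2 →
        ¬ PF lam r j ∧ letterF n lam r j = k + 1 := by
      intro r hc hval
      have h1 := hletter r j hc
      rcases (em (PF lam r j)) with h | h
      · rw [T0_val_of_PF h] at hval; omega
      · rw [T0_val_of_not_PF h] at hval; exact ⟨h, by omega⟩
    by_contra hne
    have main : ∀ b b', InShape lam b j → InShape lam b' j → b < b' →
        T0 n lam b j = 2 * k + 2 → T0 n lam b' j = 2 * k + 2 → False := by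
      intro b b' hinb hinb' hbb hvb hvb'
      obtain ⟨hPb, hlb⟩ := even_char b hinb hvb
      obtain ⟨hPb', hlb'⟩ := even_char b' hinb' hvb'
      have hinb1 : InShape lam (b+1) j := inShape_col hp hinb' (by omega)
      have hle : b + 1 ≤ j := hinb1.2.1
      have hmm : mm lam (j - b) ≤ n + 1 + b := by
        have := mm_le lam (j - b); omega
      have hs := (letterF_col_step (n := n) hp hle hmm).1
      have h2 : letterF n lam (b+1) j ≤ letterF n lam b' j := by
        rcases Nat.eq_or_lt_of_le (show b + 1 ≤ b' by omega) with he | hlt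
        · rw [he]
        · exact letterF_col_mono (n := n) hp hln (by omega) hinb'
      have heq : letterF n lam (b+1) j = letterF n lam b j := by omega
      apply hPb
      refine ⟨hinb1, ?_⟩
      rw [letterF, letterF] at heq
      have hidx : j - (b + 1) = j - b - 1 := by omega
      rw [hidx] at heq
      have hb1 := mm_le lam (j - b)
      have hb2 := mm_le lam (j - b - 1)
      obtain ⟨hm1, hm2⟩ := mm_col_step hp hle
      omega
    rcases Nat.lt_trichotomy a a' with h | h | h
    · exact main a a' hin hin' h hv hv'
    · exact hne h
    · exact main a' a hin' hin h hv' hv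
  · -- diagonal unprimed
    intro r hin
    have hnp : ¬ PF lam r r := by
      rintro ⟨⟨_, hc, _⟩, _⟩; omega
    rw [T0_val_of_not_PF hnp]; omega

lemma T0_diag_val (hpos : ∀ x ∈ lam, 0 < x) (hln : lam.length ≤ n)
    {i : ℕ} (hi1 : 1 ≤ i) (hi : i ≤ lam.length) :
    T0 n lam (i-1) (i-1) = 2 * (n - lam.length + i) := by
  have hnp : ¬ PF lam (i-1) (i-1) := by
    rintro ⟨⟨_, hc, _⟩, _⟩; omega
  rw [T0_val_of_not_PF hnp, letterF]
  have hz : (i : ℕ) - 1 - (i - 1) = 0 := by omega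
  rw [hz, mm_zero lam hpos]
  omega

lemma T0_isLowest (hp : lam.Pairwise (· > ·)) (hpos : ∀ x ∈ lam, 0 < x)
    (hln : lam.length ≤ n) : IsLowestPT n lam (T0 n lam) := by
  refine ⟨T0_isPT hp hpos hln, ?_⟩
  intro i hi1 hi
  exact ⟨strip_card hp hpos hln hi1 hi, strip_connected hp hpos hln hi1 hi,
    strip_no2x2 hp hln hi1 hi, strip_diag_mem hp hpos hln hi1 hi,
    T0_diag_val hpos hln hi1 hi⟩

lemma T0_wt (hp : lam.Pairwise (· > ·)) (hpos : ∀ x ∈ lam, 0 < x)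
    (hln : lam.length ≤ n) {k : ℕ} (hk1 : 1 ≤ k) (hk : k ≤ n) :
    wtPT lam (T0 n lam) k = lam.getD (n - k) 0 := by
  have hwt : wtPT lam (T0 n lam) k = (letterCells lam (T0 n lam) k).card := rfl
  rw [hwt]
  rcases Nat.lt_or_ge (n - lam.length) k with hbig | hsmall
  · -- k = n - L + i
    set i := k + lam.length - n with hi
    have hi1 : 1 ≤ i := by omega
    have hiL : i ≤ lam.length := by omega
    have hk' : n - lam.length + i = k := by omega
    have := strip_card (n := n) hp hpos hln hi1 hiL
    rw [hk'] at this
    rw [this]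
    congr 1
    omega
  · -- letter too small : empty
    have : letterCells lam (T0 n lam) k = ∅ := by
      apply Finset.eq_empty_of_forall_notMem
      intro p hmem
      unfold letterCells at hmem
      rw [Finset.mem_filter, mem_cells] at hmem
      obtain ⟨hin, hval⟩ := hmem
      have hl := (T0_letter_iff hp hln hin k).mp hval
      have := (letterF_lb hp hln hin).1
      omega
    rw [this, List.getD_eq_default _ _ (by omega)]
    simp

variable {n : ℕ} {lam : List ℕ} {T : ℕ → ℕ → ℕ}

lemma rowMonoT (hT : IsPrimedTableau n lam T) {r c c' : ℕ}
    (hin' : InShape lam r c') (hc : r ≤ c) (hcc : c ≤ c') : T r c ≤ T r c' := by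
  induction c' with
  | zero =>
    have : c = 0 := by omega
    rw [this]
  | succ m ih =>
    rcases Nat.lt_or_ge c (m + 1) with h1 | h1
    · have hm : InShape lam r m := inShape_left hin' (by omega)
      exact le_trans (ih hm (by omega)) (hT.2.1 r m hm hin')
    · have : c = m + 1 := by omega
      rw [this]

lemma diagT (hL : IsLowestPT n lam T) {r : ℕ} (hr : r < lam.length) :
    T r r = 2 * (n - lam.length + r + 1) := by
  have h := (hL.2 (r + 1) (by omega) (by omega)).2.2.2.2
  simp only [Nat.add_sub_cancel] at h; omega

lemma lowerT (hpos : ∀ x ∈ lam, 0 < x)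
    (hL : IsLowestPT n lam T) {r c : ℕ} (hin : InShape lam r c) :
    2 * (n - lam.length + r + 1) ≤ T r c := by
  obtain ⟨h1, h2, h3⟩ := hin
  rw [← diagT hL h1]
  exact rowMonoT hL.1 ⟨h1, h2, h3⟩ (le_refl _) h2

lemma mem_letterCells_iff {k : ℕ} (p : ℕ × ℕ) :
    p ∈ letterCells lam T k ↔ InShape lam p.1 p.2 ∧
      (T p.1 p.2 = 2 * k - 1 ∨ T p.1 p.2 = 2 * k) := by
  unfold letterCells
  rw [Finset.mem_filter, mem_cells]

/-- A downward-closed subset of `range N` is an initial segment measured by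
its cardinality. -/
lemma initseg (N : ℕ) (f : ℕ → Prop) [DecidablePred f]
    (mono : ∀ d, d + 1 < N → f (d + 1) → f d) {d : ℕ} (hd : d < N) :
    f d ↔ d < ((Finset.range N).filter (fun x => f x)).card := by
  induction N with
  | zero => omega
  | succ N ih =>
    by_cases hf : f N
    · have all : ∀ j, ∀ e, e + j = N → f e := by
        intro j
        induction j with
        | zero => intro e he; rw [show e = N by omega]; exact hf
        | succ j ihj =>
          intro e he
          exact mono e (by omega) (ihj (e+1) (by omega))
      have heq : (Finset.range (N+1)).filter (fun x => f x) = Finset.range (N+1) := by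
        apply Finset.filter_true_of_mem
        intro x hx
        rw [Finset.mem_range] at hx
        exact all (N - x) x (by omega)
      rw [heq, Finset.card_range]
      exact ⟨fun _ => hd, fun _ => all (N - d) d (by omega)⟩
    · have hsplit : (Finset.range (N+1)).filter (fun x => f x) =
          (Finset.range N).filter (fun x => f x) := by
        rw [Finset.range_add_one, Finset.filter_insert, if_neg hf]
      rw [hsplit]
      rcases Nat.lt_or_ge d N with h1 | h1
      · exact ih (fun e he hfe => mono e (by omega) hfe) h1
      · have hdN : d = N := by omega
        have hcard : ((Finset.range N).filter (fun x => f x)).card ≤ N :=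
          le_trans (Finset.card_filter_le _ _) (le_of_eq (Finset.card_range N))
        constructor
        · intro hfd; rw [hdN] at hfd; exact absurd hfd hf
        · intro hlt; omega

lemma pathHit {S : Finset (ℕ × ℕ)} {p q : ℕ × ℕ} (hpS : p ∈ S)
    (h : Relation.ReflTransGen (fun a b => a ∈ S ∧ b ∈ S ∧ Adj a b) p q)
    {s : ℕ} (h1 : p.1 ≤ s) (h2 : s ≤ q.1) : ∃ c, (s, c) ∈ S := by
  induction h with
  | refl => exact ⟨p.2, by rw [show s = p.1 by omega, Prod.mk.eta]; exact hpS⟩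
  | @tail b q hpb hstep ih =>
    rcases le_or_gt s b.1 with hsb | hsb
    · exact ih hsb
    · have hq1 : q.1 = b.1 + 1 := by
        rcases hstep.2.2 with ⟨e1, _⟩ | ⟨_, e2 | e2⟩ <;> omega
      exact ⟨q.2, by rw [show s = q.1 by omega, Prod.mk.eta]; exact hstep.2.1⟩

lemma vertPair {S : Finset (ℕ × ℕ)} {p q : ℕ × ℕ}
    (h : Relation.ReflTransGen (fun a b => a ∈ S ∧ b ∈ S ∧ Adj a b) p q)
    {r : ℕ} (h1 : r + 1 ≤ p.1) (h2 : q.1 ≤ r) :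
    ∃ c, (r, c) ∈ S ∧ (r + 1, c) ∈ S := by
  induction h with
  | refl => omega
  | @tail b q hpb hstep ih =>
    rcases le_or_gt b.1 r with hsb | hsb
    · exact ih hsb
    · have hb1 : b.1 = r + 1 ∧ q.1 = r ∧ b.2 = q.2 := by
        rcases hstep.2.2 with ⟨e1, _⟩ | ⟨e1, e2 | e2⟩ <;>
          exact ⟨by omega, by omega, by omega⟩
      refine ⟨q.2, ?_, ?_⟩
      · rw [show r = q.1 by omega, Prod.mk.eta]; exact hstep.2.1
      · rw [← hb1.2.2, show r + 1 = b.1 by omega, Prod.mk.eta]; exact hstep.1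

/-- Row-count function for the set of entries with letter at most `k`. -/
def aF (lam : List ℕ) (T : ℕ → ℕ → ℕ) (k r : ℕ) : ℕ :=
  ((Finset.range (lam.getD r 0)).filter (fun d => (T r (r + d) + 1) / 2 ≤ k)).card

lemma charA (hT : IsPrimedTableau n lam T) (k : ℕ) {r c : ℕ} (hin : InShape lam r c) :
    ((T r c + 1) / 2 ≤ k ↔ c - r < aF lam T k r) := by
  obtain ⟨h1, h2, h3⟩ := hin
  have hmono : ∀ d, d + 1 < lam.getD r 0 → ((T r (r + (d+1)) + 1) / 2 ≤ k) →
      ((T r (r + d) + 1) / 2 ≤ k) := by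
    intro d hd hfd
    have hin1 : InShape lam r (r + d) := ⟨h1, by omega, by omega⟩
    have hin2 : InShape lam r (r + d + 1) := ⟨h1, by omega, by omega⟩
    have hm := hT.2.1 r (r + d) hin1 hin2
    have h5 : r + (d + 1) = r + d + 1 := by omega
    rw [h5] at hfd
    omega
  have h := initseg (lam.getD r 0) (fun d => (T r (r + d) + 1) / 2 ≤ k) hmono
      (show c - r < lam.getD r 0 by omega)
  rw [show r + (c - r) = c by omega] at h
  unfold aF
  exact h

lemma aF_le (lam : List ℕ) (T : ℕ → ℕ → ℕ) (k r : ℕ) : aF lam T k r ≤ lam.getD r 0 :=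
  le_trans (Finset.card_filter_le _ _) (le_of_eq (Finset.card_range _))

lemma keyQ (hp : lam.Pairwise (· > ·)) (hpos : ∀ x ∈ lam, 0 < x) (hln : lam.length ≤ n)
    (hL : IsLowestPT n lam T) :
    ∀ i, i ≤ lam.length → ∀ r c, InShape lam r c →
      ((T r c + 1) / 2 ≤ n - lam.length + i ↔
        c - r < lam.getD (lam.length - i + r) 0) := by
  intro i
  induction i with
  | zero =>
    intro _ r c hin
    have hlow := lowerT hpos hL hin
    rw [show lam.length - 0 + r = lam.length + r by omega,
      List.getD_eq_default _ _ (by omega)]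
    have hr := hin.1
    exact ⟨fun h => by omega, fun h => by omega⟩
  | succ i IH =>
    intro hi1 r₀ c₀ hin₀
    have IH' := IH (by omega)
    clear IH
    obtain ⟨hcard, hconn, h2x2, hdmem, hdval⟩ := hL.2 (i+1) (by omega) (by omega)
    set khi := n - lam.length + (i + 1) with hkhi
    have hkhi1 : 1 ≤ khi := by omega
    set S := letterCells lam T khi with hSdef
    -- membership characterization for S
    have hmemS : ∀ u v : ℕ, ((u, v) ∈ S ↔ InShape lam u v ∧
        lam.getD (lam.length - i + u) 0 ≤ v - u ∧ v - u < aF lam T khi u) := by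
      intro u v
      rw [hSdef, mem_letterCells_iff]
      simp only
      constructor
      · rintro ⟨hin, hv⟩
        have hb1 := (hL.1.1 u v hin).1
        have h1 : (T u v + 1) / 2 ≤ khi := by omega
        have h2 : ¬ ((T u v + 1) / 2 ≤ n - lam.length + i) := by omega
        rw [charA hL.1 khi hin] at h1
        rw [IH' u v hin] at h2
        exact ⟨hin, by omega, h1⟩
      · rintro ⟨hin, hb, ha⟩
        have hb1 := (hL.1.1 u v hin).1
        rw [← charA hL.1 khi hin] at ha
        have h2 : ¬ (v - u < lam.getD (lam.length - i + u) 0) := by omega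
        rw [← IH' u v hin] at h2
        exact ⟨hin, by omega⟩
    have hSin : ∀ p : ℕ × ℕ, p ∈ S → InShape lam p.1 p.2 := by
      intro p hp2
      rw [hSdef, mem_letterCells_iff] at hp2
      exact hp2.1
    -- basic facts about the row counts
    have fA : ∀ r, aF lam T khi r ≤ lam.getD r 0 := fun r => aF_le lam T khi r
    have hrow_lt : ∀ r, 1 ≤ aF lam T khi r → r < lam.length := by
      intro r h1
      by_contra hc
      have h2 : lam.getD r 0 = 0 := List.getD_eq_default _ _ (by omega)
      have := fA r
      omega
    have fB : ∀ r, lam.getD (lam.length - i + r) 0 ≤ aF lam T khi r := by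
      intro r
      rcases Nat.eq_zero_or_pos (lam.getD (lam.length - i + r) 0) with h0 | h0
      · omega
      · have hblt : lam.length - i + r < lam.length := by
          by_contra hc
          rw [List.getD_eq_default _ _ (by omega)] at h0; omega
        have hble : lam.getD (lam.length - i + r) 0 ≤ lam.getD r 0 :=
          getD_anti lam hp (by omega)
        have hin : InShape lam r (r + lam.getD (lam.length - i + r) 0 - 1) :=
          ⟨by omega, by omega, by omega⟩
        have hIHr := (IH' r _ hin).mpr (by omega)
        have := (charA hL.1 khi hin).mp (by omega)
        omega
    have fC : ∀ r, 1 ≤ aF lam T khi (r+1) → aF lam T khi (r+1) + 1 ≤ aF lam T khi r := by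
      intro r h1
      have hr1 : r + 1 < lam.length := hrow_lt (r+1) h1
      have hin1 : InShape lam (r+1) (r + 1 + (aF lam T khi (r+1) - 1)) := by
        refine ⟨hr1, by omega, ?_⟩
        have := fA (r+1); omega
      have hup : InShape lam r (r + 1 + (aF lam T khi (r+1) - 1)) := inShape_up hp hin1
      have hlt1 := (charA hL.1 khi hin1).mpr (by omega)
      have hmono := hL.1.2.2.1 r _ hup hin1
      have hlt2 := (charA hL.1 khi hup).mp (by omega)
      omega
    have fD : ∀ r, i + 1 ≤ r → aF lam T khi r = 0 := by
      intro r hr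
      by_contra hc
      have h1 : 1 ≤ aF lam T khi r := by omega
      have hrl := hrow_lt r h1
      have hin : InShape lam r r := ⟨hrl, le_refl _, by have := fA r; omega⟩
      have hd := diagT hL hrl
      have hnot : ¬ ((T r r + 1) / 2 ≤ khi) := by rw [hd]; omega
      rw [charA hL.1 khi hin] at hnot
      omega
    have hdiagS : (i, i) ∈ S := by simpa using hdmem
    have fE : 1 ≤ aF lam T khi i := by
      have := (hmemS i i).mp hdiagS
      omega
    have hbI : lam.getD (lam.length - i + i) 0 = 0 := by
      rw [show lam.length - i + i = lam.length by omega]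
      exact List.getD_eq_default _ _ (le_refl _)
    -- fiberwise count
    have fFiber : ∀ r, (S.filter (fun p => p.1 = r)).card =
        aF lam T khi r - lam.getD (lam.length - i + r) 0 := by
      intro r
      rw [show aF lam T khi r - lam.getD (lam.length - i + r) 0 =
        (Finset.Ico (lam.getD (lam.length - i + r) 0) (aF lam T khi r)).card by
          rw [Nat.card_Ico]]
      apply Finset.card_nbij' (fun p => p.2 - p.1) (fun d => (r, r + d))
      · intro p hp2
        rw [Finset.mem_coe, Finset.mem_filter] at hp2
        obtain ⟨hpS, hpr⟩ := hp2
        rw [← Prod.mk.eta (p := p), hpr] at hpS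
        have := (hmemS r p.2).mp hpS
        rw [Finset.mem_coe, Finset.mem_Ico]
        beta_reduce
        rw [hpr]
        omega
      · intro d hd
        rw [Finset.mem_coe, Finset.mem_Ico] at hd
        rw [Finset.mem_coe, Finset.mem_filter]
        have hrl : r < lam.length := hrow_lt r (by omega)
        have hin : InShape lam r (r + d) := ⟨hrl, by omega, by have := fA r; omega⟩
        refine ⟨(hmemS r (r + d)).mpr ⟨hin, by omega, by omega⟩, rfl⟩
      · intro p hp2
        rw [Finset.mem_coe, Finset.mem_filter] at hp2
        obtain ⟨hpS, hpr⟩ := hp2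
        have hin := hSin p hpS
        have h21 := hin.2.1
        exact Prod.ext_iff.mpr ⟨by simp only; omega, by simp only; omega⟩
      · intro d hd
        show r + d - r = d
        omega
    have fSum : ∑ r ∈ Finset.range (i+1),
        (aF lam T khi r - lam.getD (lam.length - i + r) 0) =
        lam.getD (lam.length - (i+1)) 0 := by
      rw [← hcard]
      have hmaps : ∀ p ∈ S, Prod.fst p ∈ Finset.range (i+1) := by
        intro p hpS
        have hin := hSin p hpS
        have hlow := lowerT hpos hL hin
        rw [← Prod.mk.eta (p := p)] at hpS
        have hm := (hmemS p.1 p.2).mp hpS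
        have hup : (T p.1 p.2 + 1) / 2 ≤ khi := by
          rw [charA hL.1 khi hin]; omega
        rw [Finset.mem_range]
        omega
      rw [Finset.card_eq_sum_card_fiberwise hmaps]
      apply Finset.sum_congr rfl
      intro r _
      exact (fFiber r).symm
    -- connectivity: nonempty rows propagate down to row i
    have fRows : ∀ r s, lam.getD (lam.length - i + r) 0 < aF lam T khi r →
        r ≤ s → s ≤ i → lam.getD (lam.length - i + s) 0 < aF lam T khi s := by
      intro r s hne hrs hsi
      have hrl : r < lam.length := hrow_lt r (by omega)
      have hin : InShape lam r (r + lam.getD (lam.length - i + r) 0) :=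
        ⟨hrl, by omega, by have := fA r; omega⟩
      have hmem : (r, r + lam.getD (lam.length - i + r) 0) ∈ S :=
        (hmemS _ _).mpr ⟨hin, by omega, by omega⟩
      have hpath := hconn _ hmem _ hdiagS
      obtain ⟨c, hc⟩ := pathHit hmem hpath (by simpa using hrs) (by simpa using hsi)
      have := (hmemS s c).mp hc
      omega
    have fAdjEq : ∀ r, r + 1 ≤ i → lam.getD (lam.length - i + r) 0 < aF lam T khi r →
        aF lam T khi (r+1) = lam.getD (lam.length - i + r) 0 := by
      intro r hri hne
      have hne1 := fRows r (r+1) hne (by omega) (by omega)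
      have hge : lam.getD (lam.length - i + r) 0 ≤ aF lam T khi (r+1) := by
        have hrl : r < lam.length := hrow_lt r (by omega)
        have hr1l : r + 1 < lam.length := hrow_lt (r+1) (by omega)
        have hinq : InShape lam r (r + lam.getD (lam.length - i + r) 0) :=
          ⟨hrl, by omega, by have := fA r; omega⟩
        have hinp : InShape lam (r+1) (r + 1 + lam.getD (lam.length - i + (r+1)) 0) :=
          ⟨hr1l, by omega, by have := fA (r+1); omega⟩
        have hmemq : (r, r + lam.getD (lam.length - i + r) 0) ∈ S :=
          (hmemS _ _).mpr ⟨hinq, by omega, by omega⟩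
        have hmemp : (r+1, r + 1 + lam.getD (lam.length - i + (r+1)) 0) ∈ S :=
          (hmemS _ _).mpr ⟨hinp, by omega, by omega⟩
        have hpath := hconn _ hmemp _ hmemq
        obtain ⟨c, hc1, hc2⟩ := vertPair (r := r) hpath (by simp) (by simp)
        have hm1 := (hmemS r c).mp hc1
        have hm2 := (hmemS (r+1) c).mp hc2
        have hcr : r + 1 ≤ c := hm2.1.2.1
        omega
      by_contra hne2
      have hgt : lam.getD (lam.length - i + r) 0 + 1 ≤ aF lam T khi (r+1) := by omega
      have har : lam.getD (lam.length - i + r) 0 + 2 ≤ aF lam T khi r := by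
        have := fC r (by omega)
        omega
      have hbpos : 1 ≤ lam.getD (lam.length - i + r) 0 := by
        have hlt : lam.length - i + r < lam.length := by omega
        exact getD_pos lam hpos hlt
      have hbnext : lam.getD (lam.length - i + (r+1)) 0 ≤
          lam.getD (lam.length - i + r) 0 - 1 := by
        by_cases h2 : lam.length - i + (r + 1) < lam.length
        · have := getD_strict lam hp
            (show lam.length - i + r < lam.length - i + (r+1) by omega) h2
          omega
        · rw [List.getD_eq_default _ _ (by omega)]; omega
      have hrl : r < lam.length := hrow_lt r (by omega)
      have hr1l : r + 1 < lam.length := hrow_lt (r+1) (by omega)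
      set c := r + lam.getD (lam.length - i + r) 0 with hcdef
      have hfa := fA r
      have hfa1 := fA (r+1)
      have m1 : (r, c) ∈ S := (hmemS _ _).mpr ⟨⟨hrl, by omega, by omega⟩, by omega, by omega⟩
      have m2 : (r, c+1) ∈ S := (hmemS _ _).mpr ⟨⟨hrl, by omega, by omega⟩, by omega, by omega⟩
      have m3 : (r+1, c) ∈ S := (hmemS _ _).mpr ⟨⟨hr1l, by omega, by omega⟩, by omega, by omega⟩
      have m4 : (r+1, c+1) ∈ S :=
        (hmemS _ _).mpr ⟨⟨hr1l, by omega, by omega⟩, by omega, by omega⟩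
      exact h2x2 r c ⟨m1, m3, m2, m4⟩
    -- least nonempty row
    have hex : ∃ r, lam.getD (lam.length - i + r) 0 < aF lam T khi r := ⟨i, by omega⟩
    set r0 := Nat.find hex with hr0def
    have hr0 : lam.getD (lam.length - i + r0) 0 < aF lam T khi r0 := Nat.find_spec hex
    have hr0min : ∀ r, r < r0 → aF lam T khi r = lam.getD (lam.length - i + r) 0 := by
      intro r hr
      have h1 := Nat.find_min hex hr
      have h2 := fB r
      omega
    have hr0i : r0 ≤ i := by
      by_contra hc
      have := Nat.find_min hex (show i < r0 by omega)
      omega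
    -- telescoping sum
    have tele : ∀ m, m ≤ i - r0 →
        ∑ r ∈ Finset.Ico (i - m) (i+1),
          (aF lam T khi r - lam.getD (lam.length - i + r) 0) = aF lam T khi (i - m) := by
      intro m
      induction m with
      | zero =>
        intro _
        rw [show i - 0 = i by omega]
        rw [Finset.sum_eq_sum_Ico_succ_bot (by omega), Finset.Ico_self, Finset.sum_empty]
        omega
      | succ m ihm =>
        intro hm
        have hs : i - (m+1) + 1 = i - m := by omega
        rw [Finset.sum_eq_sum_Ico_succ_bot (by omega), hs, ihm (by omega)]
        have hnem := fRows r0 (i - (m+1)) hr0 (by omega) (by omega)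
        have hadj := fAdjEq (i - (m+1)) (by omega) hnem
        rw [hs] at hadj
        have := fB (i - (m+1))
        omega
    have hsum0 : ∑ r ∈ Finset.Ico 0 r0,
        (aF lam T khi r - lam.getD (lam.length - i + r) 0) = 0 := by
      apply Finset.sum_eq_zero
      intro r hr
      rw [Finset.mem_Ico] at hr
      rw [hr0min r hr.2]
      omega
    have hteleAll : aF lam T khi r0 = lam.getD (lam.length - (i+1)) 0 := by
      have h1 := tele (i - r0) (le_refl _)
      rw [show i - (i - r0) = r0 by omega] at h1
      have h2 := Finset.sum_Ico_consecutive
        (fun r => aF lam T khi r - lam.getD (lam.length - i + r) 0)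
        (show 0 ≤ r0 by omega) (show r0 ≤ i + 1 by omega)
      rw [hsum0, zero_add, h1] at h2
      rw [← Finset.range_eq_Ico] at h2
      omega
    have hr0z : r0 = 0 := by
      by_contra hc
      have hprev := hr0min (r0 - 1) (by omega)
      have hC := fC (r0 - 1)
      rw [show r0 - 1 + 1 = r0 by omega] at hC
      have hC' := hC (by omega)
      have hmono : lam.getD (lam.length - i + (r0 - 1)) 0 ≤
          lam.getD (lam.length - (i+1)) 0 := by
        apply getD_anti lam hp
        omega
      omega
    -- all row counts are as in the explicit tableau
    have fAll : ∀ r, aF lam T khi r = lam.getD (lam.length - (i+1) + r) 0 := by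
      intro r
      rcases Nat.eq_zero_or_pos r with rfl | hrpos
      · rw [show lam.length - (i+1) + 0 = lam.length - (i+1) by omega]
        rw [← hteleAll, hr0z]
      · rcases le_or_gt r i with hri | hri
        · have hnem := fRows r0 (r - 1) hr0 (by omega) (by omega)
          have hadj := fAdjEq (r - 1) (by omega) hnem
          rw [show r - 1 + 1 = r by omega] at hadj
          rw [hadj]
          congr 1
          omega
        · rw [fD r (by omega), List.getD_eq_default _ _ (by omega)]
    rw [← fAll r₀]
    exact charA hL.1 khi hin₀

variable {n : ℕ} {lam : List ℕ} {T : ℕ → ℕ → ℕ}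

lemma lettersEq (hp : lam.Pairwise (· > ·)) (hpos : ∀ x ∈ lam, 0 < x)
    (hln : lam.length ≤ n) (hL : IsLowestPT n lam T) {r c : ℕ} (hin : InShape lam r c) :
    (T r c + 1) / 2 = letterF n lam r c := by
  have hlb := letterF_lb hp hln hin
  set k := letterF n lam r c with hk
  set i := k + lam.length - n with hidef
  have hi1 : 1 ≤ i := by omega
  have hiL : i ≤ lam.length := by omega
  have e1 := letterF_le_iff hp hln hin (i := i) hiL
  have q1 := keyQ hp hpos hln hL i hiL r c hin
  have e2 := letterF_le_iff hp hln hin (i := i - 1) (by omega)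
  have q2 := keyQ hp hpos hln hL (i - 1) (by omega) r c hin
  have hrg1 : c - r < lam.getD (lam.length - i + r) 0 := e1.mp (by omega)
  have hlt1 := q1.mpr hrg1
  have hlt2 : ¬ ((T r c + 1) / 2 ≤ n - lam.length + (i - 1)) := by
    intro hcon
    have := e2.mpr (q2.mp hcon)
    omega
  omega

lemma T_eq_T0 (hp : lam.Pairwise (· > ·)) (hpos : ∀ x ∈ lam, 0 < x)
    (hln : lam.length ≤ n) (hL : IsLowestPT n lam T) :
    ∀ r c, InShape lam r c → T r c = T0 n lam r c := by
  intro r c hin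
  have hlet := lettersEq hp hpos hln hL hin
  have hlb := letterF_lb hp hln hin
  have hTb := (hL.1.1 r c hin).1
  set k := letterF n lam r c with hk
  have hTval : T r c = 2 * k - 1 ∨ T r c = 2 * k := by omega
  by_cases hPF : PF lam r c
  · rw [T0_val_of_PF hPF, ← hk]
    obtain ⟨hsh, hmm⟩ := hPF
    have hmlb := mm_lb hp hin
    have hmub := mm_le lam (c - r)
    have hlet1 : letterF n lam (r+1) c = k := by
      rw [hk, letterF, letterF, show c - (r+1) = c - r - 1 by omega, hmm]
      omega
    have hlet1' := lettersEq hp hpos hln hL hsh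
    have hT1b := (hL.1.1 (r+1) c hsh).1
    have hT1val : T (r+1) c = 2 * k - 1 ∨ T (r+1) c = 2 * k := by
      rw [hlet1] at hlet1'
      omega
    have hmono := hL.1.2.2.1 r c hin hsh
    rcases hTval with h | h
    · exact h
    · exfalso
      have hT1 : T (r+1) c = 2 * k := by omega
      have hax := hL.1.2.2.2.2.1 r (r+1) c (k-1) hin hsh (by omega) (by omega)
      omega
  · rw [T0_val_of_not_PF hPF, ← hk]
    rcases hTval with h | h
    swap
    · exact h
    exfalso
    rcases Nat.eq_or_lt_of_le hin.2.1 with hcr | hcr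
    · -- diagonal
      subst hcr
      have hdiag := hL.1.2.2.2.2.2 r hin
      omega
    · have hin' : InShape lam r (c - 1) := inShape_row hin (by omega) (by omega)
      have hlet' := lettersEq hp hpos hln hL hin'
      have hmono1 : letterF n lam r (c-1) ≤ k := by
        rw [hk]; exact letterF_row_mono (by omega)
      by_cases hky : letterF n lam r (c-1) = k
      · -- row-prime contradiction
        have hT'b := (hL.1.1 r (c-1) hin').1
        have hT'val : T r (c-1) = 2 * k - 1 ∨ T r (c-1) = 2 * k := by
          rw [hky] at hlet'
          omega
        have hmono2 : T r (c-1) ≤ T r c := by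
          have hin2 : InShape lam r (c - 1 + 1) := by
            rwa [show c - 1 + 1 = c by omega]
          have := hL.1.2.1 r (c-1) hin' hin2
          rwa [show c - 1 + 1 = c by omega] at this
        have hT' : T r (c-1) = 2 * k - 1 := by omega
        have hax := hL.1.2.2.2.1 r (c-1) c (k-1) hin' hin (by omega) (by omega)
        omega
      · -- the cell below must be in the same strip: PF holds, contradiction
        apply hPF
        have hlt : letterF n lam r (c-1) < k := lt_of_le_of_ne hmono1 hky
        have hmlb := mm_lb hp hin
        have hmub := mm_le lam (c - r)
        have hmub' := mm_le lam (c - 1 - r)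
        have hcol := mm_col_step hp (show r + 1 ≤ c by omega)
        have hce : c - r - 1 = c - 1 - r := by omega
        rw [hce] at hcol
        have hmmq : mm lam (c - 1 - r) = mm lam (c - r) + 1 := by
          rw [hk, letterF, letterF] at hlt
          omega
        have hr1L : r + 1 < lam.length := by omega
        have hspec := (mm_spec lam hp (c - 1 - r) (r+1) hr1L).mpr (by omega)
        refine ⟨⟨hr1L, by omega, by omega⟩, by rwa [hce]⟩

end Stmt15

/-- The lowest weight primed tableau of shape `lam` exists, has weight
`(0,…,0,λₗ,…,λ₁)`, and its entries are uniquely determined by the border strip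
conditions. -/
theorem stmt15 (n : ℕ) (lam : List ℕ)
    (hlam : IsStrictPartition lam) (hln : lam.length ≤ n) :
    (∃ T, IsLowestPT n lam T ∧
      ∀ k, 1 ≤ k → k ≤ n → wtPT lam T k = lam.getD (n - k) 0) ∧
    (∀ T T', IsLowestPT n lam T → IsLowestPT n lam T' →
      ∀ i j, InShape lam i j → T i j = T' i j) := by
  obtain ⟨hch, hpos⟩ := hlam
  have hp : lam.Pairwise (· > ·) := List.isChain_iff_pairwise.mp hch
  constructor
  · exact ⟨Stmt15.T0 n lam, Stmt15.T0_isLowest hp hpos hln,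
      fun k hk1 hk2 => Stmt15.T0_wt hp hpos hln hk1 hk2⟩
  · intro T T' h1 h2 i j hin
    rw [Stmt15.T_eq_T0 hp hpos hln h1 i j hin, Stmt15.T_eq_T0 hp hpos hln h2 i j hin]
end
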